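/- arXiv:1906.12107 — 7 statements merged into one kernel-verified Lean document; each statement's English description precedes it below -/
import Mathlib

section
/- Let Δ be an infinite additive subgroup of ℂ, b ∈ ℂ with 2b ∉ Δ, and φ : Δ → ℂ an additive group homomorphism. The ℂ-bilinear bracket on the vector space with basis {x_{α,i} : α ∈ Δ, i ∈ ℤ} defined by [x_{α,i}, x_{β,j}] = (i(β+b) − j(α+b)) x_{α+β,i+j−1} + B(α,β) x_{α+β,i+j} is skew-symmetric and satisfies the Jacobi identity, i.e. it makes this space a Lie algebra (the coefficient algebra Coeff(CL(b,φ)) ). -/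
/-!
Put `ψ = φ / b`, an additive map. Then
`B(α,β) = ψ(α)(β+b) − ψ(β)(α+b)`, so both structure constants are the same expression
`p(β+b) − q(α+b)`, evaluated at the integer weights `i, j` (with the index of the result shifted
by `−1`) and at the weights `ψ(α), ψ(β)` (unshifted). Bilinearity reduces skew-symmetry and Jacobi
to basis vectors, and there the Jacobi identity splits along the ℤ-index into three identities:
the Witt-type identity for the weights `i, j, k`, the same identity for `ψ`, and its polarization.
-/

/-- `B(α,β) = (1/b)(φ(α)β − φ(β)α + b(φ(α) − φ(β)))`. -/
noncomputable def Bc (b : ℂ) {Δ : AddSubgroup ℂ} (φ : Δ →+ ℂ) (α β : Δ) : ℂ :=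
  (1 / b) * (φ α * (β : ℂ) - φ β * (α : ℂ) + b * (φ α - φ β))

namespace LinearMap

variable {R M N ι : Type*} [CommRing R] [AddCommGroup M] [Module R M] [AddCommGroup N]
  [Module R N] (v : Module.Basis ι R M)

theorem eq_neg_swap_of_basis {f : M →ₗ[R] M →ₗ[R] N}
    (h : ∀ i j, f (v i) (v j) = -f (v j) (v i)) (x y : M) : f x y = -f y x := by
  have : f = -f.flip := ext_basis v v h
  exact congr($this x y)

theorem leibniz_of_basis {f : M →ₗ[R] M →ₗ[R] M}
    (h : ∀ i j k, f (v i) (f (v j) (v k)) = f (f (v i) (v j)) (v k) + f (v j) (f (v i) (v k)))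
    (x y z : M) : f x (f y z) = f (f x y) z + f y (f x z) := by
  have on_basis (i : ι) : f.compr₂ (f (v i)) = f.comp (f (v i)) + f.compl₂ (f (v i)) :=
    ext_basis v v (h i)
  have : f.flip (f y z) = (f.flip z).comp (f.flip y) + (f y).comp (f.flip z) :=
    v.ext fun i => congr($(on_basis i) y z)
  exact congr($this x)

end LinearMap

def bracketCoeff (b α p β q : ℂ) : ℂ := p * (β + b) - q * (α + b)

theorem bracketCoeff_swap (b α p β q : ℂ) :
    bracketCoeff b β q α p = -bracketCoeff b α p β q := by
  unfold bracketCoeff; ring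

theorem bracketCoeff_jacobi (b α β γ p q r s : ℂ) :
    bracketCoeff b β q γ r * bracketCoeff b α p (β + γ) (q + r - s) =
      bracketCoeff b α p β q * bracketCoeff b (α + β) (p + q - s) γ r +
        bracketCoeff b α p γ r * bracketCoeff b β q (α + γ) (p + r - s) := by
  unfold bracketCoeff; ring

theorem bracketCoeff_jacobi_polarized (b α β γ i j k p q r : ℂ) :
    bracketCoeff b β j γ k * bracketCoeff b α p (β + γ) (q + r) +
        bracketCoeff b β q γ r * bracketCoeff b α i (β + γ) (j + k) =
      bracketCoeff b α i β j * bracketCoeff b (α + β) (p + q) γ r +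
        bracketCoeff b α p β q * bracketCoeff b (α + β) (i + j) γ k +
        (bracketCoeff b α i γ k * bracketCoeff b β q (α + γ) (p + r) +
          bracketCoeff b α p γ r * bracketCoeff b β j (α + γ) (i + k)) := by
  unfold bracketCoeff; ring

section Bc

variable {Δ : AddSubgroup ℂ} {b : ℂ} (φ : Δ →+ ℂ)

theorem Bc_swap (α β : Δ) : Bc b φ β α = -Bc b φ α β := by
  unfold Bc; ring

theorem Bc_eq_bracketCoeff (hb : b ≠ 0) (α β : Δ) :
    Bc b φ α β = bracketCoeff b α (φ α / b) β (φ β / b) := by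
  unfold Bc bracketCoeff; field_simp; ring

end Bc

open Finsupp

def IsCoeffBracket {Δ : AddSubgroup ℂ} (b : ℂ) (φ : Δ →+ ℂ)
    (br : ((Δ × ℤ) →₀ ℂ) →ₗ[ℂ] ((Δ × ℤ) →₀ ℂ) →ₗ[ℂ] ((Δ × ℤ) →₀ ℂ)) : Prop :=
  ∀ (α β : Δ) (i j : ℤ), br (single (α, i) 1) (single (β, j) 1) =
    bracketCoeff b α i β j • single (α + β, i + j - 1) (1 : ℂ) +
      Bc b φ α β • single (α + β, i + j) (1 : ℂ)

namespace IsCoeffBracket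

variable {Δ : AddSubgroup ℂ} {b : ℂ} {φ : Δ →+ ℂ}
  {br : ((Δ × ℤ) →₀ ℂ) →ₗ[ℂ] ((Δ × ℤ) →₀ ℂ) →ₗ[ℂ] ((Δ × ℤ) →₀ ℂ)}

theorem single_swap (hbr : IsCoeffBracket b φ br) (α β : Δ) (i j : ℤ) :
    br (single (α, i) 1) (single (β, j) 1) = -br (single (β, j) 1) (single (α, i) 1) := by
  rw [hbr, hbr, bracketCoeff_swap, Bc_swap, add_comm β, add_comm j]
  module

theorem single_bracket_single (hbr : IsCoeffBracket b φ br) (α β γ : Δ) (i j k : ℤ) :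
    br (single (α, i) 1) (br (single (β, j) 1) (single (γ, k) 1)) =
      (bracketCoeff b β j γ k * bracketCoeff b α i (β + γ) (j + k - 1)) •
          single (α + β + γ, i + j + k - 2) 1 +
        (bracketCoeff b β j γ k * Bc b φ α (β + γ) +
            Bc b φ β γ * bracketCoeff b α i (β + γ) (j + k)) •
          single (α + β + γ, i + j + k - 1) 1 +
        (Bc b φ β γ * Bc b φ α (β + γ)) • single (α + β + γ, i + j + k) 1 := by
  rw [hbr, map_add, map_smul, map_smul, hbr, hbr, ← add_assoc α,
    show i + (j + k - 1) - 1 = i + j + k - 2 by ring,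
    show i + (j + k - 1) = i + j + k - 1 by ring,
    show i + (j + k) - 1 = i + j + k - 1 by ring, ← add_assoc i]
  push_cast
  module

theorem bracket_single_single (hbr : IsCoeffBracket b φ br) (α β γ : Δ) (i j k : ℤ) :
    br (br (single (α, i) 1) (single (β, j) 1)) (single (γ, k) 1) =
      (bracketCoeff b α i β j * bracketCoeff b (α + β) (i + j - 1) γ k) •
          single (α + β + γ, i + j + k - 2) 1 +
        (bracketCoeff b α i β j * Bc b φ (α + β) γ +
            Bc b φ α β * bracketCoeff b (α + β) (i + j) γ k) •
          single (α + β + γ, i + j + k - 1) 1 +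
        (Bc b φ α β * Bc b φ (α + β) γ) • single (α + β + γ, i + j + k) 1 := by
  rw [hbr, map_add, map_smul, map_smul, LinearMap.add_apply, LinearMap.smul_apply,
    LinearMap.smul_apply, hbr, hbr,
    show i + j - 1 + k - 1 = i + j + k - 2 by ring, show i + j - 1 + k = i + j + k - 1 by ring]
  push_cast
  module

theorem single_jacobi (hbr : IsCoeffBracket b φ br) (hb : b ≠ 0) (α β γ : Δ) (i j k : ℤ) :
    br (single (α, i) 1) (br (single (β, j) 1) (single (γ, k) 1)) =
      br (br (single (α, i) 1) (single (β, j) 1)) (single (γ, k) 1) +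
        br (single (β, j) 1) (br (single (α, i) 1) (single (γ, k) 1)) := by
  rw [hbr.single_bracket_single, hbr.single_bracket_single, hbr.bracket_single_single,
    add_comm β α, add_comm j i]
  simp only [Bc_eq_bracketCoeff φ hb, AddSubgroup.coe_add, map_add, add_div]
  match_scalars
  · simpa using bracketCoeff_jacobi b α β γ i j k 1
  · simpa only [mul_one] using bracketCoeff_jacobi_polarized ..
  · simpa using bracketCoeff_jacobi b α β γ (φ α / b) (φ β / b) (φ γ / b) 0

end IsCoeffBracket

theorem stmt1_general (Δ : AddSubgroup ℂ)
    (b : ℂ) (hb : 2 * b ∉ Δ) (φ : Δ →+ ℂ)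
    (br : ((Δ × ℤ) →₀ ℂ) →ₗ[ℂ] ((Δ × ℤ) →₀ ℂ) →ₗ[ℂ] ((Δ × ℤ) →₀ ℂ))
    (hbr : ∀ (α β : Δ) (i j : ℤ),
      br (Finsupp.single (α, i) 1) (Finsupp.single (β, j) 1)
        = ((i : ℂ) * ((β : ℂ) + b) - (j : ℂ) * ((α : ℂ) + b)) •
            Finsupp.single (α + β, i + j - 1) (1 : ℂ)
          + Bc b φ α β • Finsupp.single (α + β, i + j) (1 : ℂ)) :
    (∀ x y, br x y = - br y x) ∧
    (∀ x y z, br x (br y z) = br (br x y) z + br y (br x z)) := by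
  have hCL : IsCoeffBracket b φ br := hbr
  have hb0 : b ≠ 0 := by
    rintro rfl
    exact hb (by simp)
  refine ⟨LinearMap.eq_neg_swap_of_basis Finsupp.basisSingleOne ?_,
    LinearMap.leibniz_of_basis Finsupp.basisSingleOne ?_⟩
  · rintro ⟨α, i⟩ ⟨β, j⟩
    simpa only [coe_basisSingleOne] using hCL.single_swap α β i j
  · rintro ⟨α, i⟩ ⟨β, j⟩ ⟨γ, k⟩
    simpa only [coe_basisSingleOne] using hCL.single_jacobi hb0 α β γ i j k

/-- The bilinear bracket on the free ℂ-vector space with basis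
`{x_{α,i} : α ∈ Δ, i ∈ ℤ}` (modelled as `(Δ × ℤ) →₀ ℂ` with `x_{α,i} = single (α,i) 1`)
given by `[x_{α,i}, x_{β,j}] = (i(β+b) − j(α+b)) x_{α+β,i+j−1} + B(α,β) x_{α+β,i+j}`
is skew-symmetric and satisfies the Jacobi identity, i.e. it defines a Lie algebra
(the coefficient algebra `Coeff(CL(b,φ))`). -/
theorem stmt1 (Δ : AddSubgroup ℂ) (hΔinf : (Δ : Set ℂ).Infinite)
    (b : ℂ) (hb : 2 * b ∉ Δ) (φ : Δ →+ ℂ)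
    (br : ((Δ × ℤ) →₀ ℂ) →ₗ[ℂ] ((Δ × ℤ) →₀ ℂ) →ₗ[ℂ] ((Δ × ℤ) →₀ ℂ))
    (hbr : ∀ (α β : Δ) (i j : ℤ),
      br (Finsupp.single (α, i) 1) (Finsupp.single (β, j) 1)
        = ((i : ℂ) * ((β : ℂ) + b) - (j : ℂ) * ((α : ℂ) + b)) •
            Finsupp.single (α + β, i + j - 1) (1 : ℂ)
          + Bc b φ α β • Finsupp.single (α + β, i + j) (1 : ℂ)) :
    (∀ x y, br x y = - br y x) ∧
    (∀ x y z, br x (br y z) = br (br x y) z + br y (br x z)) :=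
  stmt1_general Δ b hb φ br hbr
end

section
/- Every 2-cocycle α_λ(·,·) on CL(b,φ) with values in ℂ[λ] satisfies: for all α, β ∈ Δ, the polynomial α_λ(x_α, x_β) ∈ ℂ[λ] has degree at most 3 in λ. -/
/-- A 2-cocycle on the Lie conformal algebra `CL(b,φ)`, recorded through its values
`F α β = α_λ(x_α, x_β) ∈ ℂ[λ]` on the free `ℂ[∂]`-generators.  (By conformal
sesquilinearity `α_λ(∂a,b) = −λα_λ(a,b) = −α_λ(a,∂b)`, a 2-cocycle is determined by
these values, skew-symmetry becomes `α_λ(x_α,x_β) = −α_{−λ}(x_β,x_α)`, and the cocycle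
identity `α_λ(a,[b_μ c]) − α_μ(b,[a_λ c]) = α_{λ+μ}([a_λ b],c)` evaluated on generators,
using `[x_α λ x_β] = ((α+b)∂ + (α+β+2b)λ + B(α,β))x_{α+β}`, becomes the displayed
polynomial identity, stated here by evaluation at all complex points `l, m`.) -/
def IsCocycle (Δ : AddSubgroup ℂ) (b : ℂ) (φ : Δ →+ ℂ)
    (F : Δ → Δ → Polynomial ℂ) : Prop :=
  (∀ α β : Δ, ∀ l : ℂ, (F α β).eval l = -((F β α).eval (-l))) ∧
  (∀ α β γ : Δ, ∀ l m : ℂ,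
    (((β : ℂ) + b) * l + ((β : ℂ) + (γ : ℂ) + 2 * b) * m + Bc b φ β γ)
        * (F α (β + γ)).eval l
      - (((α : ℂ) + b) * m + ((α : ℂ) + (γ : ℂ) + 2 * b) * l + Bc b φ α γ)
        * (F β (α + γ)).eval m
    = (-(((α : ℂ) + b)) * (l + m) + ((α : ℂ) + (β : ℂ) + 2 * b) * l + Bc b φ α β)
        * (F (α + β) γ).eval (l + m))

open Polynomial

lemma auxG (g sx dd : ℂ) (k : ℕ) :
    ((C g * (C sx * X + C dd) : ℂ[X])).coeff (k+2) = 0 := by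
  rw [coeff_C_mul, coeff_add, coeff_C_mul, coeff_X, coeff_C]
  norm_num

lemma aux1 (a bb : ℂ) (P : ℂ[X]) (k : ℕ) :
    ((C a * X + C bb) * P).coeff (k+1) = a * P.coeff k + bb * P.coeff (k+1) := by
  rw [add_mul, coeff_add, mul_assoc, coeff_C_mul, coeff_X_mul, coeff_C_mul]

/-- Master coefficient-extraction lemma. -/
lemma master (p q r s t u v w : ℂ) (F G H : ℂ[X])
    (hid : ∀ l m : ℂ, (p*l + q*m + r) * F.eval l - (s*l + t*m + u) * G.eval m
      = (p*l + v*m + w) * H.eval (l+m)) (j : ℕ) :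
    (C (p * F.coeff (j+1) + r * F.coeff (j+2)) + C (q * F.coeff (j+2)) * X : ℂ[X])
      = C p * hasseDeriv (j+1) H + (C w + C v * X) * hasseDeriv (j+2) H := by
  have h1 : ∀ m : ℂ,
      ((C p * X + C (q*m + r)) * F - C (G.eval m) * (C s * X + C (t*m+u)) : ℂ[X])
        = (C p * X + C (v*m + w)) * (taylor m H) := by
    intro m
    apply Polynomial.funext
    intro l
    have h0 := hid l m
    simp only [eval_sub, eval_mul, eval_add, eval_C, eval_X, taylor_eval]
    linear_combination h0
  have h2 : ∀ m : ℂ, p * F.coeff (j+1) + (q*m+r) * F.coeff (j+2)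
      = p * (hasseDeriv (j+1) H).eval m + (v*m+w) * (hasseDeriv (j+2) H).eval m := by
    intro m
    have h3 := congrArg (fun P : ℂ[X] => P.coeff (j+2)) (h1 m)
    simp only [coeff_sub] at h3
    rw [auxG, sub_zero, show j+2 = (j+1)+1 from by omega, aux1, aux1,
      taylor_coeff, taylor_coeff] at h3
    rw [show (j+1)+1 = j+2 from by omega] at h3
    linear_combination h3
  apply Polynomial.funext
  intro m
  have h4 := h2 m
  simp only [eval_add, eval_mul, eval_C, eval_X]
  linear_combination h4

lemma rhs_c0 (p w v : ℂ) (P1 P2 : ℂ[X]) :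
    (C p * P1 + (C w + C v * X) * P2).coeff 0
      = p * P1.coeff 0 + w * P2.coeff 0 := by
  rw [coeff_add, add_mul, coeff_add, coeff_C_mul, coeff_C_mul, mul_coeff_zero]
  simp

lemma rhs_c1 (p w v : ℂ) (P1 P2 : ℂ[X]) (i : ℕ) :
    (C p * P1 + (C w + C v * X) * P2).coeff (i+1)
      = p * P1.coeff (i+1) + w * P2.coeff (i+1) + v * P2.coeff i := by
  rw [coeff_add, add_mul, coeff_add, coeff_C_mul, coeff_C_mul, mul_assoc,
    coeff_C_mul, coeff_X_mul]
  ring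

lemma keyA (b r s t u v w : ℂ) (hb : b ≠ 0) (h G : ℂ[X])
    (hid : ∀ l m : ℂ, (b*l + (2*b)*m + r) * h.eval l - (s*l + t*m + u) * G.eval m
      = (b*l + v*m + w) * h.eval (l+m)) :
    h.degree ≤ 3 := by
  by_contra hd
  have hn4 : 4 ≤ h.natDegree := by
    by_contra hn
    have h3 : h.degree ≤ (3:ℕ) := Polynomial.natDegree_le_iff_degree_le.1 (by omega)
    exact hd (by exact_mod_cast h3)
  have hne : h ≠ 0 := by rintro rfl; simp at hn4
  obtain ⟨d, hdeq⟩ := Nat.exists_eq_add_of_le hn4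
  have ha : h.coeff (d+4) ≠ 0 := by
    rw [show d+4 = h.natDegree from by omega]
    exact Polynomial.coeff_ne_zero_of_eq_degree (Polynomial.degree_eq_natDegree hne)
  have hc5 : h.coeff (d+5) = 0 := Polynomial.coeff_eq_zero_of_natDegree_lt (by omega)
  have hch1 : (((d+4).choose (d+3) : ℕ) : ℂ) = (d:ℂ)+4 := by
    rw [show d+3 = d+4-1 from by omega, Nat.choose_symm (by omega), Nat.choose_one_right]
    push_cast; ring
  have hch2 : (((d+4).choose (d+2) : ℕ) : ℂ) = ((d:ℂ)+4)*((d:ℂ)+3)/2 := by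
    rw [show d+2 = d+4-2 from by omega, Nat.choose_symm (by omega), Nat.cast_choose_two]
    push_cast; ring
  have e1 := congrArg (fun P : ℂ[X] => P.coeff (0+1))
    (master b (2*b) r s t u v w h G h hid (d+2))
  have e2 := congrArg (fun P : ℂ[X] => P.coeff (1+1))
    (master b (2*b) r s t u v w h G h hid (d+1))
  rw [rhs_c1, hasseDeriv_coeff, hasseDeriv_coeff, hasseDeriv_coeff] at e1 e2
  rw [show 0+1+(d+2+1) = d+4 from by omega, show 0+1+(d+2+2) = d+5 from by omega,
    show 0+(d+2+2) = d+4 from by omega, show d+2+2 = d+4 from by omega,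
    Nat.choose_self, hch1, hc5] at e1
  rw [show 1+1+(d+1+1) = d+4 from by omega, show 1+1+(d+1+2) = d+5 from by omega,
    show 1+(d+1+2) = d+4 from by omega, show d+1+1 = d+2 from by omega,
    show d+1+2 = d+3 from by omega, hch2, hch1, hc5] at e2
  norm_num [coeff_add, coeff_C, coeff_C_mul, coeff_X] at e1 e2
  have hd4 : ((d:ℂ)+4) ≠ 0 := by
    have : ((d:ℂ)+4) = ((d+4 : ℕ):ℂ) := by push_cast; ring
    rw [this]; exact Nat.cast_ne_zero.2 (by omega)
  have hd1 : ((d:ℂ)+1) ≠ 0 := by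
    have : ((d:ℂ)+1) = ((d+1 : ℕ):ℂ) := by push_cast; ring
    rw [this]; exact Nat.cast_ne_zero.2 (by omega)
  have hz : b*((d:ℂ)+4)*((d:ℂ)+1) * h.coeff (d+4) = 0 := by
    linear_combination (-2*((d:ℂ)+4))*e1 + 2*e2
  exact (mul_ne_zero (mul_ne_zero (mul_ne_zero hb hd4) hd1) ha) hz

lemma keyB (p q r s t u v w : ℂ) (hpq : q - p ≠ 0) (F G H : ℂ[X]) (hH : H.degree ≤ 3)
    (hid : ∀ l m : ℂ, (p*l + q*m + r) * F.eval l - (s*l + t*m + u) * G.eval m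
      = (p*l + v*m + w) * H.eval (l+m)) :
    F.degree ≤ 3 := by
  by_contra hd
  have hn4 : 4 ≤ F.natDegree := by
    by_contra hn
    have h3 : F.degree ≤ (3:ℕ) := Polynomial.natDegree_le_iff_degree_le.1 (by omega)
    exact hd (by exact_mod_cast h3)
  have hne : F ≠ 0 := by rintro rfl; simp at hn4
  obtain ⟨d, hdeq⟩ := Nat.exists_eq_add_of_le hn4
  have ha : F.coeff (d+4) ≠ 0 := by
    rw [show d+4 = F.natDegree from by omega]
    exact Polynomial.coeff_ne_zero_of_eq_degree (Polynomial.degree_eq_natDegree hne)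
  have hc5 : F.coeff (d+5) = 0 := Polynomial.coeff_eq_zero_of_natDegree_lt (by omega)
  have hHn : H.natDegree ≤ 3 := Polynomial.natDegree_le_iff_degree_le.2 (by exact_mod_cast hH)
  have hH0 : ∀ k, 4 ≤ k → H.coeff k = 0 := fun k hk =>
    Polynomial.coeff_eq_zero_of_natDegree_lt (by omega)
  -- coefficient of l^(d+5), constant term in m:
  have e3 := congrArg (fun P : ℂ[X] => P.coeff 0)
    (master p q r s t u v w F G H hid (d+3))
  -- coefficient of l^(d+4), coefficient of m^1:
  have e4 := congrArg (fun P : ℂ[X] => P.coeff (0+1))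
    (master p q r s t u v w F G H hid (d+2))
  rw [rhs_c0, hasseDeriv_coeff, hasseDeriv_coeff] at e3
  rw [rhs_c1, hasseDeriv_coeff, hasseDeriv_coeff, hasseDeriv_coeff] at e4
  rw [show d+3+1 = d+4 from by omega, show d+3+2 = d+5 from by omega,
    hH0 (0+(d+4)) (by omega), hH0 (0+(d+5)) (by omega)] at e3
  rw [show 0+1+(d+2+1) = d+4 from by omega, show 0+1+(d+2+2) = d+5 from by omega,
    show 0+(d+2+2) = d+4 from by omega, show d+2+2 = d+4 from by omega,
    hH0 (d+4) (by omega), hH0 (d+5) (by omega)] at e4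
  norm_num [coeff_add, coeff_C, coeff_C_mul, coeff_X, hc5] at e3 e4
  have e3' : p * F.coeff (d+4) = 0 := by
    rcases e3 with h | h <;> rw [h] <;> ring
  have e4' : q * F.coeff (d+4) = 0 := by
    rcases e4 with h | h <;> rw [h] <;> ring
  have hz : (q - p) * F.coeff (d+4) = 0 := by
    linear_combination e4' - e3'
  exact (mul_ne_zero hpq ha) hz

/-- Every 2-cocycle on `CL(b,φ)` has `α_λ(x_α,x_β)` of degree at most 3
in `λ`, for all `α, β ∈ Δ`. -/
theorem stmt2 (Δ : AddSubgroup ℂ) (hΔinf : (Δ : Set ℂ).Infinite)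
    (b : ℂ) (hb : 2 * b ∉ Δ) (φ : Δ →+ ℂ)
    (F : Δ → Δ → Polynomial ℂ) (hF : IsCocycle Δ b φ F) :
    ∀ α β : Δ, (F α β).degree ≤ 3 := by
  have hb0 : b ≠ 0 := by
    rintro rfl
    exact hb (by simpa using Δ.zero_mem)
  -- Step A: F μ 0 has degree ≤ 3 for every μ
  have stepA : ∀ μ : Δ, (F μ 0).degree ≤ 3 := by
    intro μ
    apply keyA b (Bc b φ 0 0) ((μ:ℂ)+2*b) ((μ:ℂ)+b) (Bc b φ μ 0) (-((μ:ℂ)+b))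
      (Bc b φ μ 0) hb0 (F μ 0) (F 0 μ)
    intro l m
    have h0 := hF.2 μ 0 0 l m
    simp only [add_zero, zero_add, ZeroMemClass.coe_zero] at h0
    linear_combination h0
  intro α β
  apply keyB ((β:ℂ)+b) ((β:ℂ)+2*b) (Bc b φ β 0) ((α:ℂ)+2*b) ((α:ℂ)+b) (Bc b φ α 0)
    (-((α:ℂ)+b)) (Bc b φ α β) (by ring_nf; simpa using hb0) (F α β) (F β α)
    (F (α+β) 0) (stepA (α+β))
  intro l m
  have h0 := hF.2 α β 0 l m
  simp only [add_zero, zero_add, ZeroMemClass.coe_zero] at h0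
  linear_combination h0
end

section
/- Assume that 3b ∉ Δ, or that 3b ∈ Δ and φ(3b) ≠ 0. Then every 2-cocycle on CL(b,φ) is a coboundary; that is, there exists a function Φ : Δ → ℂ with α_λ(x_α, x_β) = (λ(α+β+2b) + B(α,β)) Φ(α+β) for all α, β ∈ Δ. (Equivalently, CL(b,φ) has no non-trivial central extension by a one-dimensional center.) -/
/-!
Put `α = 0` in the cocycle identity and write `δ = β + γ`, `g = F 0 δ`. At `λ = 0` this gives
`φ(δ) F(β,γ)(μ) = -g(0) (μ(δ+2b) + B(β,γ))`, which settles the case `φ(δ) ≠ 0`.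
If `φ(δ) = 0`, then `B(β,γ) = -t(δ+2b)` with `t = φ(γ)/b`, and after the shift `μ ↦ μ + t` the
identity at `μ = 0`, where `δ + 3b ≠ 0` enters, shows `F(β,γ)(μ + t) = g(μ)`. The identity that
remains for `g` is affine in `β`, so two decompositions of `δ` force `g` to be additive, hence
`g = g'(0) X`.
-/

open Polynomial

theorem Polynomial.eq_C_mul_X_of_eval_add {R : Type*} [CommRing R] [IsDomain R] [CharZero R]
    {p : R[X]} (hp : ∀ x y, p.eval (x + y) = p.eval x + p.eval y) :
    p = C (p.coeff 1) * X := by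
  have hdouble : p.comp (C 2 * X) = C 2 * p := by
    refine Polynomial.funext fun x => ?_
    simp only [eval_comp, eval_mul, eval_C, eval_X, two_mul, hp]
  ext n
  have hn := congrArg (coeff · n) hdouble
  simp only [comp_C_mul_X_coeff, coeff_C_mul] at hn
  rcases eq_or_ne n 1 with rfl | hn1
  · simp
  · have h2 : (2 : R) ^ n ≠ 2 := by
      rw [Ne, ← Nat.cast_ofNat, ← Nat.cast_pow, Nat.cast_inj]
      exact fun h => hn1 (Nat.pow_eq_self_iff (by norm_num) |>.mp h)
    rw [coeff_C_mul_X, if_neg hn1]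
    exact (mul_eq_mul_left_iff.mp (hn.trans (mul_comm _ _))).resolve_left h2

theorem AddSubgroup.coe_add_ne_zero_of_notMem {H : AddSubgroup ℂ} (x : H) {c : ℂ} (hc : c ∉ H) :
    (x : ℂ) + c ≠ 0 := fun h =>
  hc (by simp [eq_neg_of_add_eq_zero_right h])

section

variable {Δ : AddSubgroup ℂ} {b : ℂ} {φ : Δ →+ ℂ}

theorem Bc_zero_left (hb : b ≠ 0) (γ : Δ) : Bc b φ 0 γ = -φ γ := by
  simp only [Bc, map_zero, ZeroMemClass.coe_zero]
  field_simp
  ring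

theorem Bc_of_map_add_eq_zero (hb : b ≠ 0) {β γ : Δ} (hδ : φ (β + γ) = 0) :
    Bc b φ β γ = -(φ γ / b) * ((β : ℂ) + γ + 2 * b) := by
  rw [map_add] at hδ
  rw [Bc, eq_neg_of_add_eq_zero_left hδ]
  field_simp
  ring

namespace IsCocycle

variable {F : Δ → Δ → ℂ[X]} (hF : IsCocycle Δ b φ F)
include hF

theorem zero_left (hb : b ≠ 0) (β γ : Δ) (l m : ℂ) :
    (((β : ℂ) + b) * l + ((β : ℂ) + γ + 2 * b) * m + Bc b φ β γ) * (F 0 (β + γ)).eval l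
      = (b * m + ((γ : ℂ) + 2 * b) * l - φ γ) * (F β γ).eval m
        + (((β : ℂ) + b) * l - b * m - φ β) * (F β γ).eval (l + m) := by
  have h := hF.2 0 β γ l m
  simp only [zero_add, ZeroMemClass.coe_zero, Bc_zero_left hb] at h
  linear_combination h

theorem map_add_mul_eval (hb : b ≠ 0) (β γ : Δ) (m : ℂ) :
    φ (β + γ) * (F β γ).eval m
      = -(m * ((β : ℂ) + γ + 2 * b) + Bc b φ β γ) * (F 0 (β + γ)).eval 0 := by
  have h := hF.zero_left hb β γ 0 m
  simp only [mul_zero, zero_add, add_zero] at h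
  rw [map_add]
  linear_combination h

theorem zero_left_taylor (hb : b ≠ 0) {β γ : Δ} (hδ : φ (β + γ) = 0) (l s : ℂ) :
    (((β : ℂ) + b) * l + ((β : ℂ) + γ + 2 * b) * s) * (F 0 (β + γ)).eval l
      = (b * s + ((γ : ℂ) + 2 * b) * l) * (taylor (φ γ / b) (F β γ)).eval s
        + (((β : ℂ) + b) * l - b * s) * (taylor (φ γ / b) (F β γ)).eval (l + s) := by
  have h := hF.zero_left hb β γ l (s + φ γ / b)
  have hβ : φ β = -φ γ := by rw [map_add] at hδ; linear_combination hδ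
  rw [Bc_of_map_add_eq_zero hb hδ, hβ, ← add_assoc] at h
  simp only [taylor_eval]
  have ht : b * (φ γ / b) = φ γ := mul_div_cancel₀ _ hb
  linear_combination h
    + ((F β γ).eval (s + φ γ / b) - (F β γ).eval (l + s + φ γ / b)) * ht

theorem taylor_eq_of_map_add_eq_zero (hb : b ≠ 0) {β γ : Δ} (hβ : (β : ℂ) + b ≠ 0)
    (h2 : (β : ℂ) + γ + 2 * b ≠ 0) (h3 : (β : ℂ) + γ + 3 * b ≠ 0) (hδ : φ (β + γ) = 0) :
    taylor (φ γ / b) (F β γ) = F 0 (β + γ) := by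
  set g := F 0 (β + γ)
  set v := taylor (φ γ / b) (F β γ)
  have hg0 : g.eval 0 = 0 := by
    have h := hF.zero_left_taylor hb hδ 0 1
    simp only [mul_zero, zero_add, add_zero, mul_one, zero_sub, neg_mul] at h
    exact (mul_eq_zero.mp (by linear_combination h)).resolve_left h2
  have hpoly : C ((β : ℂ) + b) * g = C (((γ : ℂ) + 2 * b) * v.eval 0) + C ((β : ℂ) + b) * v := by
    refine eq_of_infinite_eval_eq _ _ ((Set.finite_singleton 0).infinite_compl.mono ?_)
    intro l (hl : l ≠ 0)
    have h := hF.zero_left_taylor hb hδ l 0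
    simp only [mul_zero, add_zero, zero_add, sub_zero] at h
    simp only [Set.mem_ofPred_eq, eval_mul, eval_add, eval_C]
    exact mul_left_cancel₀ hl (by linear_combination h)
  have hv0 : v.eval 0 = 0 := by
    have h := congrArg (eval 0) hpoly
    simp only [eval_mul, eval_add, eval_C, hg0, mul_zero] at h
    exact (mul_eq_zero.mp (by linear_combination -h)).resolve_left h3
  rw [hv0, mul_zero, C_0, zero_add] at hpoly
  exact (mul_left_cancel₀ (C_ne_zero.mpr hβ) hpoly).symm

theorem zero_left_of_map_add_eq_zero (hb : b ≠ 0) {β γ δ : Δ} (hβγ : β + γ = δ)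
    (hβ : (β : ℂ) + b ≠ 0) (h2 : (δ : ℂ) + 2 * b ≠ 0) (h3 : (δ : ℂ) + 3 * b ≠ 0) (hδ : φ δ = 0)
    (l s : ℂ) :
    (((β : ℂ) + b) * l + ((δ : ℂ) + 2 * b) * s) * (F 0 δ).eval l
      = (b * s + ((γ : ℂ) + 2 * b) * l) * (F 0 δ).eval s
        + (((β : ℂ) + b) * l - b * s) * (F 0 δ).eval (l + s) := by
  subst hβγ
  have h := hF.zero_left_taylor hb hδ l s
  rwa [hF.taylor_eq_of_map_add_eq_zero hb hβ h2 h3 hδ] at h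

theorem eval_add_of_map_eq_zero (hb : b ≠ 0) (hΔb : ∀ β : Δ, (β : ℂ) + b ≠ 0) {δ : Δ}
    (h2 : (δ : ℂ) + 2 * b ≠ 0) (h3 : (δ : ℂ) + 3 * b ≠ 0) (hδ : φ δ = 0) {x : Δ}
    (hx : (x : ℂ) ≠ 0) (l s : ℂ) :
    (F 0 δ).eval (l + s) = (F 0 δ).eval l + (F 0 δ).eval s := by
  have hsplit : ∀ l s : ℂ,
      (x : ℂ) * l * ((F 0 δ).eval (l + s) - (F 0 δ).eval l - (F 0 δ).eval s) = 0 := by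
    intro l s
    have h0 := hF.zero_left_of_map_add_eq_zero hb (zero_add δ) (hΔb 0) h2 h3 hδ l s
    have hx' := hF.zero_left_of_map_add_eq_zero hb (add_sub_cancel x δ) (hΔb x) h2 h3 hδ l s
    push_cast at h0 hx'
    linear_combination h0 - hx'
  have hadd : ∀ l s : ℂ, l ≠ 0 → (F 0 δ).eval (l + s) = (F 0 δ).eval l + (F 0 δ).eval s := by
    intro l s hl
    have := (mul_eq_zero.mp (hsplit l s)).resolve_left (mul_ne_zero hx hl)
    linear_combination this
  rcases eq_or_ne l 0 with rfl | hl
  · have h1 := hadd 1 0 one_ne_zero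
    rw [add_zero, left_eq_add] at h1
    rw [zero_add, h1, zero_add]
  · exact hadd l s hl

theorem exists_forall_eval_eq (hb : b ≠ 0) (hΔb : ∀ β : Δ, (β : ℂ) + b ≠ 0) {x : Δ}
    (hx : (x : ℂ) ≠ 0) {δ : Δ} (h2 : (δ : ℂ) + 2 * b ≠ 0) (h3 : φ δ = 0 → (δ : ℂ) + 3 * b ≠ 0) :
    ∃ c : ℂ, ∀ β γ : Δ, β + γ = δ → ∀ l : ℂ,
      (F β γ).eval l = (l * ((β : ℂ) + γ + 2 * b) + Bc b φ β γ) * c := by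
  by_cases hδ : φ δ = 0
  · have hlin := eq_C_mul_X_of_eval_add (hF.eval_add_of_map_eq_zero hb hΔb h2 (h3 hδ) hδ hx)
    refine ⟨(F 0 δ).coeff 1 / ((δ : ℂ) + 2 * b), ?_⟩
    rintro β γ rfl l
    have hshift : (F β γ).eval l = (F 0 (β + γ)).eval (l - φ γ / b) := by
      rw [← hF.taylor_eq_of_map_add_eq_zero hb (hΔb β) h2 (h3 hδ) hδ, taylor_eval, sub_add_cancel]
    conv_lhs => rw [hshift, hlin]
    rw [Bc_of_map_add_eq_zero hb hδ, eval_mul, eval_C, eval_X]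
    push_cast at h2 ⊢
    linear_combination (-(F 0 (β + γ)).coeff 1 * (l - φ γ / b)) * mul_inv_cancel₀ h2
  · refine ⟨-(F 0 δ).eval 0 / φ δ, ?_⟩
    rintro β γ rfl l
    rw [mul_div_assoc', eq_div_iff hδ]
    linear_combination hF.map_add_mul_eval hb β γ l

end IsCocycle

end

/-- If `3b ∉ Δ`, or `3b ∈ Δ` and `φ(3b) ≠ 0`, then every 2-cocycle on
`CL(b,φ)` is a coboundary: there is `Φ : Δ → ℂ` with
`α_λ(x_α,x_β) = (λ(α+β+2b) + B(α,β))Φ(α+β)` for all `α, β ∈ Δ`. -/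
theorem stmt3 (Δ : AddSubgroup ℂ) (hΔinf : (Δ : Set ℂ).Infinite)
    (b : ℂ) (hb : 2 * b ∉ Δ) (φ : Δ →+ ℂ)
    (h3b : (3 * b ∉ Δ) ∨ (∃ h : 3 * b ∈ Δ, φ ⟨3 * b, h⟩ ≠ 0))
    (F : Δ → Δ → Polynomial ℂ) (hF : IsCocycle Δ b φ F) :
    ∃ Φ : Δ → ℂ, ∀ α β : Δ, ∀ l : ℂ,
      (F α β).eval l
        = (l * ((α : ℂ) + (β : ℂ) + 2 * b) + Bc b φ α β) * Φ (α + β) := by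
  have hb0 : b ≠ 0 := by
    rintro rfl
    exact hb (by simp)
  have hbΔ : b ∉ Δ := fun h => hb (by simpa [two_mul] using Δ.add_mem h h)
  have h3 : ∀ δ : Δ, φ δ = 0 → (δ : ℂ) + 3 * b ≠ 0 := by
    intro δ hδ
    rcases h3b with h3b | ⟨h3b, hφ⟩
    · exact AddSubgroup.coe_add_ne_zero_of_notMem δ h3b
    · intro hsum
      have h3δ : (⟨3 * b, h3b⟩ : Δ) = -δ := Subtype.ext (by simp [eq_neg_of_add_eq_zero_right hsum])
      exact hφ (by rw [h3δ, map_neg, hδ, neg_zero])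
  obtain ⟨x, hxΔ, hx⟩ := hΔinf.nontrivial.exists_ne 0
  choose Φ hΦ using fun δ : Δ =>
    hF.exists_forall_eval_eq hb0 (AddSubgroup.coe_add_ne_zero_of_notMem · hbΔ)
      (x := ⟨x, hxΔ⟩) hx
      (AddSubgroup.coe_add_ne_zero_of_notMem δ hb) (h3 δ)
  exact ⟨Φ, fun α β => hΦ (α + β) α β rfl⟩
end

section
/- Suppose f_{α,γ}(λ,∂) ∈ ℂ[λ,∂] (α, γ ∈ Δ) is a family satisfying the intermediate-series equation. If there exist α₀, β₀ ∈ Δ with f_{α₀,β₀} = 0, then f_{α,β} = 0 for all α, β ∈ Δ. -/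
/-- Evaluation of a two-variable polynomial `P(λ,∂) ∈ ℂ[λ,∂]` at `λ = l`, `∂ = d`. -/
noncomputable def ev2 (P : MvPolynomial (Fin 2) ℂ) (l d : ℂ) : ℂ :=
  MvPolynomial.eval ![l, d] P

/-- The intermediate-series equation for a family `f_{α,γ}(λ,∂) ∈ ℂ[λ,∂]`:
`((β+b)λ − (α+b)μ + B(α,β)) f_{α+β,γ}(λ+μ,∂)
  = f_{β,γ}(μ,λ+∂) f_{α,β+γ}(λ,∂) − f_{α,γ}(λ,μ+∂) f_{β,α+γ}(μ,∂)`
for all `α, β, γ ∈ Δ` (an identity in `ℂ[λ,μ,∂]`, stated via evaluation at all complex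
points `l, m, d`).  Equivalently, `V = ⊕_{γ∈Δ} ℂ[∂]M_γ` with
`x_α λ M_γ = f_{α,γ}(λ,∂) M_{α+γ}` is a free intermediate series module over
`CL(b,φ)`. -/
def ISE (Δ : AddSubgroup ℂ) (b : ℂ) (φ : Δ →+ ℂ)
    (f : Δ → Δ → MvPolynomial (Fin 2) ℂ) : Prop :=
  ∀ α β γ : Δ, ∀ l m d : ℂ,
    (((β : ℂ) + b) * l - ((α : ℂ) + b) * m + Bc b φ α β)
        * ev2 (f (α + β) γ) (l + m) d
      = ev2 (f β γ) m (l + d) * ev2 (f α (β + γ)) l d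
        - ev2 (f α γ) l (m + d) * ev2 (f β (α + γ)) m d

/-!
Put `μ = ((β+b)λ + B(α,β))/(α+b)` in the equation for `(α,β,γ)`: the left side dies, so whenever
`f_{α,γ} f_{β,α+γ}` vanishes, so does `f_{β,γ}(μ, λ+∂) f_{α,β+γ}(λ,∂)`, and since `ℂ[λ,∂]` is a
domain and `(λ,∂) ↦ (μ, λ+∂)` is an invertible affine change of variables, `f_{β,γ} = 0` or
`f_{α,β+γ} = 0`. The equation then has right side zero, and as the coefficient
`(β+b)λ − (α+b)μ + B(α,β)` is a nonzero linear form (because `α+β+2b ≠ 0`), `f_{α+β,γ} = 0`.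
Hence one vanishing entry `f_{α,γ}` kills the whole column `γ`. Applying the same argument to
`(β₀−γ, 0, γ)` shows that some entry of each column `γ` vanishes, given that column `β₀` does.
-/

open MvPolynomial

lemma eq_zero_of_forall_ev2_eq_zero {P : MvPolynomial (Fin 2) ℂ}
    (h : ∀ l d : ℂ, ev2 P l d = 0) : P = 0 := by
  refine MvPolynomial.funext fun x => ?_
  have hx : ![x 0, x 1] = x := by
    funext i
    fin_cases i <;> rfl
  simpa [ev2, hx] using h (x 0) (x 1)

@[simp]
lemma ev2_zero (l d : ℂ) : ev2 0 l d = 0 := by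
  simp [ev2]

lemma ev2_mul (P Q : MvPolynomial (Fin 2) ℂ) (l d : ℂ) :
    ev2 (P * Q) l d = ev2 P l d * ev2 Q l d := by
  simp [ev2]

lemma ev2_bind₁ (g p q : MvPolynomial (Fin 2) ℂ) (l d : ℂ) :
    ev2 (bind₁ ![p, q] g) l d = ev2 g (ev2 p l d) (ev2 q l d) := by
  refine (eval₂Hom_bind₁ (RingHom.id ℂ) ![l, d] ![p, q] g).trans (congrArg (eval · g) ?_)
  funext i
  fin_cases i <;> rfl

lemma eq_zero_or_eq_zero_of_forall_ev2_mul_eq_zero (g h : MvPolynomial (Fin 2) ℂ)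
    {c₁ : ℂ} (c₀ : ℂ) (hc : c₁ ≠ 0)
    (H : ∀ l d : ℂ, ev2 g (c₁ * l + c₀) (l + d) * ev2 h l d = 0) :
    g = 0 ∨ h = 0 := by
  set g' : MvPolynomial (Fin 2) ℂ := bind₁ ![C c₁ * X 0 + C c₀, X 0 + X 1] g
  have hg' (l d : ℂ) : ev2 g' l d = ev2 g (c₁ * l + c₀) (l + d) := by
    rw [ev2_bind₁]
    simp [ev2]
  have hprod : g' * h = 0 :=
    eq_zero_of_forall_ev2_eq_zero fun l d => by rw [ev2_mul, hg', H]
  refine (mul_eq_zero.mp hprod).imp_left fun hzero => eq_zero_of_forall_ev2_eq_zero fun p e => ?_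
  have hinv := hg' ((p - c₀) / c₁) (e - (p - c₀) / c₁)
  rwa [hzero, ev2_zero, mul_div_cancel₀ _ hc, sub_add_cancel, add_sub_cancel, eq_comm] at hinv

lemma eq_zero_of_forall_linear_mul_ev2_eq_zero (F : MvPolynomial (Fin 2) ℂ) {p q : ℂ} (r : ℂ)
    (hpq : p + q ≠ 0) (H : ∀ l m d : ℂ, (p * l - q * m + r) * ev2 F (l + m) d = 0) : F = 0 := by
  refine eq_zero_of_forall_ev2_eq_zero fun x d => ?_
  set l := (1 + q * x - r) / (p + q)
  have hcoeff : p * l - q * (x - l) + r = 1 := by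
    simp only [l]
    field_simp
    ring
  simpa [hcoeff] using H l (x - l) d

section

variable {Δ : AddSubgroup ℂ} {b : ℂ}

lemma coe_add_add_coe_add_ne_zero (hb : 2 * b ∉ Δ) (α β : Δ) :
    ((β : ℂ) + b) + ((α : ℂ) + b) ≠ 0 := fun h =>
  hb <| by
    rw [show 2 * b = ((-(α + β) : Δ) : ℂ) by push_cast; linear_combination h]
    exact SetLike.coe_mem _

lemma coe_add_ne_zero (hb : 2 * b ∉ Δ) (α : Δ) : (α : ℂ) + b ≠ 0 := fun h =>
  coe_add_add_coe_add_ne_zero hb α α (by rw [h, add_zero])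

variable {φ : Δ →+ ℂ} {f : Δ → Δ → MvPolynomial (Fin 2) ℂ}

namespace ISE

lemma eq_zero_or_eq_zero_of_eq_zero_or_eq_zero (hf : ISE Δ b φ f) (hb : 2 * b ∉ Δ)
    (α β γ : Δ) (hvan : f α γ = 0 ∨ f β (α + γ) = 0) :
    f β γ = 0 ∨ f α (β + γ) = 0 := by
  have hα := coe_add_ne_zero hb α
  refine eq_zero_or_eq_zero_of_forall_ev2_mul_eq_zero _ _ (Bc b φ α β / ((α : ℂ) + b))
    (div_ne_zero (coe_add_ne_zero hb β) hα) fun l d => ?_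
  set m := ((β : ℂ) + b) / ((α : ℂ) + b) * l + Bc b φ α β / ((α : ℂ) + b)
  have hcoeff : ((β : ℂ) + b) * l - ((α : ℂ) + b) * m + Bc b φ α β = 0 := by
    simp only [m]
    field_simp
    ring
  have hsecond : ev2 (f α γ) l (m + d) * ev2 (f β (α + γ)) m d = 0 := by
    rcases hvan with h | h <;> simp [h]
  have := hf α β γ l m d
  rwa [hcoeff, zero_mul, hsecond, sub_zero, eq_comm] at this

lemma eq_zero_of_eq_zero (hf : ISE Δ b φ f) (hb : 2 * b ∉ Δ) {α γ : Δ} (hαγ : f α γ = 0)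
    (x : Δ) : f x γ = 0 := by
  obtain ⟨β, rfl⟩ : ∃ β, α + β = x := ⟨x - α, add_sub_cancel α x⟩
  refine eq_zero_of_forall_linear_mul_ev2_eq_zero _ (Bc b φ α β)
    (coe_add_add_coe_add_ne_zero hb α β) fun l m d => ?_
  have hfirst : ev2 (f β γ) m (l + d) * ev2 (f α (β + γ)) l d = 0 := by
    rcases hf.eq_zero_or_eq_zero_of_eq_zero_or_eq_zero hb α β γ (.inl hαγ) with h | h <;>
      simp [h]
  have := hf α β γ l m d
  rwa [hαγ, ev2_zero, zero_mul, sub_zero, hfirst] at this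

end ISE

end

theorem stmt10_general (Δ : AddSubgroup ℂ)
    (b : ℂ) (hb : 2 * b ∉ Δ) (φ : Δ →+ ℂ)
    (f : Δ → Δ → MvPolynomial (Fin 2) ℂ) (hf : ISE Δ b φ f)
    (α₀ β₀ : Δ) (h0 : f α₀ β₀ = 0) :
    ∀ α β : Δ, f α β = 0 := by
  intro α γ
  have hcolumn : f 0 β₀ = 0 := hf.eq_zero_of_eq_zero hb h0 0
  have hentry : f 0 γ = 0 ∨ f (β₀ - γ) γ = 0 := by
    simpa using hf.eq_zero_or_eq_zero_of_eq_zero_or_eq_zero hb (β₀ - γ) 0 γ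
      (.inr (by rwa [sub_add_cancel]))
  rcases hentry with h | h <;> exact hf.eq_zero_of_eq_zero hb h α

/-- If a family satisfying the intermediate-series equation has some
vanishing member `f_{α₀,β₀} = 0`, then all members vanish. -/
theorem stmt10 (Δ : AddSubgroup ℂ) (hΔinf : (Δ : Set ℂ).Infinite)
    (b : ℂ) (hb : 2 * b ∉ Δ) (φ : Δ →+ ℂ)
    (f : Δ → Δ → MvPolynomial (Fin 2) ℂ) (hf : ISE Δ b φ f)
    (α₀ β₀ : Δ) (h0 : f α₀ β₀ = 0) :
    ∀ α β : Δ, f α β = 0 :=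
  stmt10_general Δ b hb φ f hf α₀ β₀ h0
end

section
/- Suppose f_{α,γ}(λ,∂) ∈ ℂ[λ,∂] (α, γ ∈ Δ) satisfies the intermediate-series equation and every f_{α,γ} is nonzero. Then for every γ ∈ Δ there exist constants q_γ, m_γ ∈ ℂ such that f_{0,γ}(λ,∂) = b(∂ + q_γ λ + m_γ). -/
open Polynomial

lemma comp_coeff_top (q : ℂ[X]) (n : ℕ) (h : q.natDegree ≤ n) (t : ℂ) :
    (q.comp (X + C t)).coeff n = q.coeff n := by
  rw [← taylor_apply, taylor_coeff]
  have hd : hasseDeriv n q = C (q.coeff n) := by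
    ext m
    rw [hasseDeriv_coeff, coeff_C]
    rcases m with _ | m
    · simp
    · rw [if_neg (Nat.succ_ne_zero m), coeff_eq_zero_of_natDegree_lt (by omega), mul_zero]
  rw [hd, eval_C]

lemma comp_coeff_pred (q : ℂ[X]) (k : ℕ) (h : q.natDegree ≤ k + 1) (t : ℂ) :
    (q.comp (X + C t)).coeff k = q.coeff k + ((k : ℂ) + 1) * t * q.coeff (k + 1) := by
  rw [← taylor_apply, taylor_coeff]
  have hd : hasseDeriv k q = C (q.coeff k) + C (((k : ℂ) + 1) * q.coeff (k + 1)) * X := by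
    ext m
    rw [hasseDeriv_coeff]
    rcases m with _ | m
    · simp
    rcases m with _ | m
    · rw [show 1 + k = k + 1 by omega, Nat.choose_succ_self_right]
      simp [coeff_C]
    · rw [coeff_eq_zero_of_natDegree_lt (by omega), mul_zero]
      simp [coeff_X, coeff_C, coeff_one]
  rw [hd]
  simp
  ring

lemma coeff_mul_top (u v : ℂ[X]) (k : ℕ) (hu : u.natDegree ≤ k + 1) (hv : v.natDegree ≤ k + 1) :
    (u * v).coeff (2 * k + 1) = u.coeff (k + 1) * v.coeff k + u.coeff k * v.coeff (k + 1) := by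
  rw [coeff_mul, Finset.Nat.sum_antidiagonal_eq_sum_range_succ_mk]
  have hsub : ({k, k + 1} : Finset ℕ) ⊆ Finset.range (2 * k + 1 + 1) := by
    intro i hi
    simp only [Finset.mem_insert, Finset.mem_singleton] at hi
    rcases hi with rfl | rfl <;> simp <;> omega
  rw [← Finset.sum_subset hsub ?_]
  · rw [Finset.sum_insert (by simp), Finset.sum_singleton]
    rw [show 2 * k + 1 - k = k + 1 by omega, show 2 * k + 1 - (k + 1) = k by omega]
    ring
  · intro i hi hnot
    simp only [Finset.mem_insert, Finset.mem_singleton] at hnot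
    push_neg at hnot
    rcases lt_or_ge i k with hik | hik
    · rw [coeff_eq_zero_of_natDegree_lt (lt_of_le_of_lt hv (by omega)), mul_zero]
    · rw [coeff_eq_zero_of_natDegree_lt (lt_of_le_of_lt hu (by omega)), zero_mul]

noncomputable def toPP (P : MvPolynomial (Fin 2) ℂ) : Polynomial (Polynomial ℂ) :=
  MvPolynomial.aeval ![Polynomial.C Polynomial.X, Polynomial.X] P

lemma ev2_eq (P : MvPolynomial (Fin 2) ℂ) (l d : ℂ) :
    ev2 P l d = ((toPP P).map (Polynomial.evalRingHom l)).eval d := by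
  induction P using MvPolynomial.induction_on with
  | C a => simp [ev2, toPP]
  | add p q hp hq =>
      simp only [ev2, toPP, map_add, Polynomial.map_add, eval_add] at hp hq ⊢
      rw [hp, hq]
  | mul_X p i hp =>
      simp only [ev2, toPP, map_mul, Polynomial.map_mul, eval_mul] at hp ⊢
      rw [hp]
      congr 1
      fin_cases i <;>
        simp [MvPolynomial.eval_X, MvPolynomial.aeval_X]


/-- If a family satisfying the intermediate-series equation has all
members nonzero, then for each `γ ∈ Δ` there are constants `q_γ, m_γ ∈ ℂ` with
`f_{0,γ}(λ,∂) = b(∂ + q_γλ + m_γ)`. -/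
theorem stmt11 (Δ : AddSubgroup ℂ) (hΔinf : (Δ : Set ℂ).Infinite)
    (b : ℂ) (hb : 2 * b ∉ Δ) (φ : Δ →+ ℂ)
    (f : Δ → Δ → MvPolynomial (Fin 2) ℂ) (hf : ISE Δ b φ f)
    (hnz : ∀ α γ : Δ, f α γ ≠ 0) :
    ∀ γ : Δ, ∃ q m : ℂ, ∀ l d : ℂ,
      ev2 (f 0 γ) l d = b * (d + q * l + m) := by
  intro γ
  have hb0 : b ≠ 0 := by
    rintro rfl
    exact hb (by simpa using Δ.zero_mem)
  set P : MvPolynomial (Fin 2) ℂ := f 0 γ with hPdef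
  set g : ℂ → ℂ → ℂ := fun l d => ev2 P l d with hgdef
  have H : ∀ l m d : ℂ,
      (b * l - b * m) * g (l + m) d = g m (l + d) * g l d - g l (m + d) * g m d := by
    intro l m d
    have h := hf 0 0 γ l m d
    simp only [ZeroMemClass.coe_zero, zero_add, add_zero, Bc, map_zero, mul_zero, zero_mul,
      sub_zero, sub_self, mul_zero, add_zero] at h
    have hB : (1 / b) * ((0:ℂ) * 0 - 0 * 0 + b * ((0:ℂ) - 0)) = 0 := by ring
    simpa [hB] using h
  set Q : Polynomial (Polynomial ℂ) := toPP P with hQdef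
  set pl : ℂ → Polynomial ℂ := fun l => Q.map (evalRingHom l) with hpldef
  have hge : ∀ l d : ℂ, g l d = (pl l).eval d := fun l d => ev2_eq P l d
  have hplcoeff : ∀ (l : ℂ) (i : ℕ), (pl l).coeff i = (Q.coeff i).eval l := by
    intro l i
    simp [hpldef, coeff_map]
  have hpldeg : ∀ l : ℂ, (pl l).natDegree ≤ Q.natDegree := fun l => natDegree_map_le
  have hQ0 : Q ≠ 0 := by
    intro h0
    apply hnz 0 γ
    apply MvPolynomial.funext
    intro x
    have hx : ![x 0, x 1] = x := by
      funext i
      fin_cases i <;> rfl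
    have : g (x 0) (x 1) = 0 := by rw [hge]; simp [hpldef, h0]
    simpa [hgdef, ev2, hx] using this
  -- the master polynomial identity
  have star : ∀ l m : ℂ, Polynomial.C (b * (l - m)) * pl (l + m)
      = (pl m).comp (X + C l) * pl l - (pl l).comp (X + C m) * pl m := by
    intro l m
    apply Polynomial.funext
    intro d
    simp only [eval_mul, eval_sub, eval_C, eval_comp, eval_add, eval_X]
    rw [← hge, ← hge, ← hge, ← hge, ← hge,
      show d + l = l + d from add_comm d l, show d + m = m + d from add_comm d m]
    linear_combination H l m d
  -- Step A: pl 0 = b X + c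
  have hRL : ∀ l : ℂ, pl l = 0 ∨ ∀ d : ℂ, g 0 (l + d) = b * l + g 0 d := by
    intro l
    have key : pl l * (C (b * l) - (pl 0).comp (X + C l) + pl 0) = 0 := by
      apply Polynomial.funext
      intro d
      simp only [eval_mul, eval_add, eval_sub, eval_C, eval_comp, eval_X, eval_zero]
      rw [← hge, ← hge, ← hge, show d + l = l + d from add_comm d l]
      have h := H l 0 d
      simp only [mul_zero, sub_zero, add_zero, zero_add] at h
      linear_combination h
    rcases mul_eq_zero.mp key with h | h
    · exact Or.inl h
    · right
      intro d
      have h2 := congrArg (Polynomial.eval d) h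
      simp only [eval_add, eval_sub, eval_C, eval_comp, eval_X, eval_zero] at h2
      rw [← hge, ← hge, show d + l = l + d from add_comm d l] at h2
      linear_combination -h2
  have hfin : {l : ℂ | pl l = 0}.Finite := by
    have hlead : Q.coeff Q.natDegree ≠ 0 := leadingCoeff_ne_zero.mpr hQ0
    apply Set.Finite.subset (Polynomial.finite_setOf_isRoot hlead)
    intro l hl
    have : (pl l).coeff Q.natDegree = 0 := by
      simp only [Set.mem_setOf_eq] at hl
      rw [hl, coeff_zero]
    rw [hplcoeff] at this
    exact this
  have hp0 : pl 0 = C b * X + C (g 0 0) := by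
    apply Polynomial.eq_of_infinite_eval_eq
    apply Set.Infinite.mono (s := {l : ℂ | pl l = 0}ᶜ) ?_ (hfin.infinite_compl)
    intro l hl
    rcases hRL l with h | h
    · exact absurd h hl
    · have h0 := h 0
      rw [add_zero] at h0
      simp only [Set.mem_setOf_eq, eval_add, eval_mul, eval_C, eval_X]
      rw [← hge]
      exact h0
  have hc1 : (Q.coeff 1).eval 0 = b := by
    rw [← hplcoeff, hp0]
    simp
  have hQdeg1 : 1 ≤ Q.natDegree := by
    apply le_natDegree_of_ne_zero
    intro h
    rw [h] at hc1
    simp at hc1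
    exact hb0 hc1.symm
  -- rule out degree ≥ 2 in the ∂-variable
  have hn1 : Q.natDegree = 1 := by
    by_contra hne
    obtain ⟨k, hk⟩ : ∃ k : ℕ, Q.natDegree = (k + 1) + 1 := ⟨Q.natDegree - 2, by omega⟩
    set K := k + 1 with hK
    have hKdeg : ∀ l : ℂ, (pl l).natDegree ≤ K + 1 := fun l => (hpldeg l).trans (le_of_eq hk)
    have hcompdeg : ∀ l t : ℂ, ((pl l).comp (X + C t)).natDegree ≤ K + 1 := by
      intro l t
      calc ((pl l).comp (X + C t)).natDegree ≤ (pl l).natDegree * (X + C t).natDegree :=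
            natDegree_comp_le
        _ = (pl l).natDegree := by rw [natDegree_X_add_C, mul_one]
        _ ≤ K + 1 := hKdeg l
    have key : ∀ l m : ℂ, ((K : ℂ) + 1) * (l - m)
        * ((Q.coeff (K + 1)).eval l * (Q.coeff (K + 1)).eval m) = 0 := by
      intro l m
      have hc := congrArg (fun p : ℂ[X] => p.coeff (2 * K + 1)) (star l m)
      simp only [coeff_C_mul, coeff_sub] at hc
      rw [coeff_eq_zero_of_natDegree_lt (lt_of_le_of_lt (hKdeg (l + m)) (by omega)),
        coeff_mul_top _ _ K (hcompdeg m l) (hKdeg l),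
        coeff_mul_top _ _ K (hcompdeg l m) (hKdeg m),
        comp_coeff_top _ _ (hKdeg m) l, comp_coeff_top _ _ (hKdeg l) m,
        comp_coeff_pred _ _ (hKdeg m) l, comp_coeff_pred _ _ (hKdeg l) m] at hc
      simp only [hplcoeff] at hc
      linear_combination -hc
    have hlK : Q.coeff (K + 1) ≠ 0 := by
      rw [← hk]
      exact leadingCoeff_ne_zero.mpr hQ0
    obtain ⟨x, hx, y, hy, hxy⟩ := ((Polynomial.finite_setOf_isRoot hlK).infinite_compl).nontrivial
    have hx' : (Q.coeff (K + 1)).eval x ≠ 0 := by simpa [Polynomial.IsRoot] using hx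
    have hy' : (Q.coeff (K + 1)).eval y ≠ 0 := by simpa [Polynomial.IsRoot] using hy
    have hK0 : ((K : ℂ) + 1) ≠ 0 := by
      have : ((K : ℂ) + 1) = ((K + 1 : ℕ) : ℂ) := by push_cast; ring
      rw [this]
      exact Nat.cast_ne_zero.mpr (Nat.succ_ne_zero K)
    exact mul_ne_zero (mul_ne_zero hK0 (sub_ne_zero.mpr hxy)) (mul_ne_zero hx' hy') (key x y)
  -- explicit linear form in the ∂-variable
  have hQform : Q = C (Q.coeff 1) * X + C (Q.coeff 0) :=
    eq_X_add_C_of_natDegree_le_one (le_of_eq hn1)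
  have hgl : ∀ l d : ℂ, g l d = (Q.coeff 1).eval l * d + (Q.coeff 0).eval l := by
    intro l d
    rw [hge, show pl l = Q.map (evalRingHom l) from rfl, hQform]
    simp
  have hne1 : Q.coeff 1 ≠ 0 := by
    intro h
    rw [h] at hc1
    simp at hc1
    exact hb0 hc1.symm
  have hi : ∀ l m : ℂ, b * (l - m) * (Q.coeff 1).eval (l + m)
      = (l - m) * ((Q.coeff 1).eval l * (Q.coeff 1).eval m) := by
    intro l m
    have h0 := H l m 0
    have h1 := H l m 1
    simp only [hgl] at h0 h1
    linear_combination h1 - h0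
  have hii : ∀ l m : ℂ, b * (l - m) * (Q.coeff 0).eval (l + m)
      = l * (Q.coeff 0).eval l * (Q.coeff 1).eval m
        - m * (Q.coeff 0).eval m * (Q.coeff 1).eval l := by
    intro l m
    have h0 := H l m 0
    simp only [hgl] at h0
    linear_combination h0
  -- the coefficient of ∂ is the constant b
  have heconst : Q.coeff 1 = C b := by
    have hediag : ∀ l : ℂ, b * (Q.coeff 1).eval (l + l)
        = (Q.coeff 1).eval l * (Q.coeff 1).eval l := by
      intro l
      have hpe : C b * ((Q.coeff 1).comp (X + C l)) = C ((Q.coeff 1).eval l) * Q.coeff 1 := by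
        apply eq_of_infinite_eval_eq
        apply Set.Infinite.mono ?_ (Set.Finite.infinite_compl (Set.finite_singleton l))
        intro m hm
        have hml : m ≠ l := hm
        simp only [Set.mem_setOf_eq, eval_mul, eval_C, eval_comp, eval_add, eval_X]
        have hlm : l - m ≠ 0 := sub_ne_zero.mpr (Ne.symm hml)
        have h2 : (l - m) * (b * (Q.coeff 1).eval (l + m))
            = (l - m) * ((Q.coeff 1).eval l * (Q.coeff 1).eval m) := by
          linear_combination hi l m
        have h3 := mul_left_cancel₀ hlm h2
        rw [show m + l = l + m from add_comm m l]
        exact h3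
      have h4 := congrArg (Polynomial.eval l) hpe
      simpa [eval_comp] using h4
    by_cases hD : (Q.coeff 1).natDegree = 0
    · have hform := eq_C_of_natDegree_eq_zero hD
      rw [hform]
      congr 1
      rw [Polynomial.coeff_zero_eq_eval_zero]
      exact hc1
    · exfalso
      have hpoly : C b * ((Q.coeff 1).comp (C 2 * X)) = Q.coeff 1 * Q.coeff 1 := by
        apply Polynomial.funext
        intro x
        simp only [eval_mul, eval_C, eval_comp, eval_X]
        rw [show (2 : ℂ) * x = x + x from by ring]
        exact hediag x
      have hdeg := congrArg natDegree hpoly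
      rw [natDegree_C_mul hb0, natDegree_comp, natDegree_C_mul_X (2 : ℂ) two_ne_zero, mul_one,
        natDegree_mul hne1 hne1] at hdeg
      omega
  have heb : ∀ x : ℂ, (Q.coeff 1).eval x = b := by
    intro x
    rw [heconst, eval_C]
  -- the constant coefficient is affine
  have haid : ∀ l m : ℂ, (l - m) * (Q.coeff 0).eval (l + m)
      = l * (Q.coeff 0).eval l - m * (Q.coeff 0).eval m := by
    intro l m
    have h := hii l m
    rw [heb, heb] at h
    apply mul_left_cancel₀ hb0
    linear_combination h
  have haff : (Q.coeff 0).natDegree ≤ 1 := by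
    by_contra hD
    push_neg at hD
    have ha0ne : Q.coeff 0 ≠ 0 := by
      intro h
      rw [h] at hD
      simp at hD
    obtain ⟨k, hk⟩ : ∃ k : ℕ, (Q.coeff 0).natDegree = (k + 1) + 1 :=
      ⟨(Q.coeff 0).natDegree - 2, by omega⟩
    have hdegle : (Q.coeff 0).natDegree ≤ (k + 1) + 1 := le_of_eq hk
    have hpoly : (X - C 1) * ((Q.coeff 0).comp (X + C 1))
        = X * Q.coeff 0 - C ((Q.coeff 0).eval 1) := by
      apply Polynomial.funext
      intro x
      simp only [eval_mul, eval_sub, eval_C, eval_comp, eval_add, eval_X, eval_one]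
      linear_combination haid x 1
    have hc := congrArg (fun p : ℂ[X] => p.coeff ((k + 1) + 1)) hpoly
    simp only [coeff_sub, sub_mul, coeff_X_mul, coeff_C] at hc
    rw [show (C (1:ℂ) * ((Q.coeff 0).comp (X + C 1))) = (Q.coeff 0).comp (X + C 1) from by
        rw [C_1, one_mul],
      comp_coeff_top _ _ hdegle 1, comp_coeff_pred _ _ hdegle 1] at hc
    have hlead : (Q.coeff 0).coeff ((k + 1) + 1) ≠ 0 := by
      rw [← hk]
      exact leadingCoeff_ne_zero.mpr ha0ne
    have hK0 : ((k : ℂ) + 1) ≠ 0 := by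
      have : ((k : ℂ) + 1) = ((k + 1 : ℕ) : ℂ) := by push_cast; ring
      rw [this]
      exact Nat.cast_ne_zero.mpr (Nat.succ_ne_zero k)
    rw [if_neg (by omega : ¬(k + 1 + 1 = 0))] at hc
    push_cast at hc
    apply mul_ne_zero hK0 hlead
    linear_combination hc
  -- conclude
  have hQ0form : Q.coeff 0 = C ((Q.coeff 0).coeff 1) * X + C ((Q.coeff 0).coeff 0) :=
    eq_X_add_C_of_natDegree_le_one haff
  refine ⟨(Q.coeff 0).coeff 1 / b, (Q.coeff 0).coeff 0 / b, ?_⟩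
  intro l d
  have h := hgl l d
  rw [heb l, hQ0form] at h
  simp only [eval_add, eval_mul, eval_C, eval_X] at h
  show g l d = _
  rw [h]
  field_simp
  ring
end

section
/- Suppose f_{α,γ}(λ,∂) ∈ ℂ[λ,∂] (α, γ ∈ Δ) satisfies the intermediate-series equation, every f_{α,γ} is nonzero, and q_γ, m_γ ∈ ℂ are the constants with f_{0,γ}(λ,∂) = b(∂ + q_γλ + m_γ). Fix β, γ ∈ Δ and write f_{β,γ}(λ,∂) = Σ_{i=0}^{m} a_i(λ)∂^i with a_m(λ) ≠ 0 (so m is the degree of f_{β,γ} in ∂). Then q_{β+γ} − q_γ = −m + (β+b)/b. -/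
open Polynomial in
lemma aux_taylor_top {P : Polynomial ℂ} {n : ℕ} (h : P.natDegree ≤ n) (l : ℂ) :
    (taylor l P).coeff n = P.coeff n := by
  rw [taylor_coeff]
  have : hasseDeriv n P = C (P.coeff n) := by
    ext j
    rw [hasseDeriv_coeff]
    cases j with
    | zero => simp
    | succ j =>
        rw [coeff_C, if_neg (by omega)]
        rw [P.coeff_eq_zero_of_natDegree_lt (lt_of_le_of_lt h (by omega))]
        ring
  rw [this, eval_C]

open Polynomial in
lemma aux_taylor_pred {P : Polynomial ℂ} {N : ℕ} (h : P.natDegree ≤ N + 1) (l : ℂ) :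
    (taylor l P).coeff N = P.coeff N + ((N : ℂ) + 1) * l * P.coeff (N + 1) := by
  rw [taylor_coeff]
  have : hasseDeriv N P = C (P.coeff N) + C (((N : ℂ) + 1) * P.coeff (N + 1)) * X := by
    ext j
    rw [hasseDeriv_coeff]
    match j with
    | 0 => simp
    | 1 =>
        rw [Nat.add_comm 1 N, Nat.choose_succ_self_right, coeff_add, coeff_C,
          if_neg one_ne_zero, coeff_C_mul, coeff_X_one]
        push_cast
        ring
    | (j+2) =>
        rw [P.coeff_eq_zero_of_natDegree_lt (lt_of_le_of_lt h (by omega))]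
        rw [coeff_add, coeff_C, if_neg (by omega), coeff_mul_X, coeff_C, if_neg (by omega)]
        ring
  rw [this]
  simp
  ring

/-- With all members nonzero and `f_{0,γ}(λ,∂) = b(∂ + q_γλ + m_γ)`,
if `f_{β,γ}` has degree `n` in the variable `∂` (writing
`f_{β,γ}(λ,∂) = Σ_{i=0}^{n} a_i(λ)∂^i` with `a_n ≠ 0`), then
`q_{β+γ} − q_γ = −n + (β+b)/b`. -/
theorem stmt13 (Δ : AddSubgroup ℂ) (hΔinf : (Δ : Set ℂ).Infinite)
    (b : ℂ) (hb : 2 * b ∉ Δ) (φ : Δ →+ ℂ)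
    (f : Δ → Δ → MvPolynomial (Fin 2) ℂ) (hf : ISE Δ b φ f)
    (hnz : ∀ α γ : Δ, f α γ ≠ 0)
    (q m : Δ → ℂ)
    (h0 : ∀ γ : Δ, ∀ l d : ℂ, ev2 (f 0 γ) l d = b * (d + q γ * l + m γ))
    (β γ : Δ) (n : ℕ) (hdeg : MvPolynomial.degreeOf 1 (f β γ) = n) :
    q (β + γ) - q γ = -(n : ℂ) + ((β : ℂ) + b) / b := by
  have hb0 : b ≠ 0 := by
    intro h
    exact hb (by rw [h, mul_zero]; exact Δ.zero_mem)
  have hβb : (β : ℂ) + b ≠ 0 := by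
    intro h
    apply hb
    have h2 : (2 : ℂ) * b = (((-β) + (-β) : Δ) : ℂ) := by push_cast; linear_combination 2 * h
    rw [h2]; exact ((-β) + (-β) : Δ).2
  have hB : Bc b φ 0 β = -φ β := by
    simp only [Bc, map_zero, ZeroMemClass.coe_zero, mul_zero, zero_mul, zero_sub, zero_add]
    field_simp
    ring
  set Q := q (β + γ) with hQ
  set M := m (β + γ) with hM
  have key : ∀ l m' d : ℂ, (((β : ℂ) + b) * l - b * m' - φ β) * ev2 (f β γ) (l + m') d
      = ev2 (f β γ) m' (l + d) * (b * (d + Q * l + M))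
        - b * ((m' + d) + q γ * l + m γ) * ev2 (f β γ) m' d := by
    intro l m' d
    have h := hf 0 β γ l m' d
    rw [hB] at h
    simp only [zero_add, ZeroMemClass.coe_zero] at h
    rw [h0, h0] at h
    linear_combination h
  set F := MvPolynomial.rename (Equiv.swap (0 : Fin 2) 1) (f β γ) with hF
  set g := MvPolynomial.finSuccEquiv ℂ 1 F with hg
  have hgd : g.natDegree = n := by
    rw [hg, MvPolynomial.natDegree_finSuccEquiv, hF, ← hdeg]
    have := MvPolynomial.degreeOf_rename_of_injective
      (p := f β γ) (Equiv.injective (Equiv.swap (0 : Fin 2) 1)) (i := (1 : Fin 2))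
    simpa using this
  have hEv : ∀ l d : ℂ, ev2 (f β γ) l d
      = Polynomial.eval d (Polynomial.map (MvPolynomial.eval ![l]) g) := by
    intro l d
    have h1 : ev2 (f β γ) l d = MvPolynomial.eval ![d, l] F := by
      have h3 : (![d, l] ∘ (Equiv.swap (0 : Fin 2) 1)) = ![l, d] := by
        funext i; fin_cases i <;> simp
      rw [ev2, hF, MvPolynomial.eval_rename, h3]
    rw [h1]
    have h2 : (![d, l] : Fin 2 → ℂ) = Fin.cons d ![l] := by
      funext i; fin_cases i <;> rfl
    rw [h2, MvPolynomial.eval_eq_eval_mv_eval']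
  set A : ℂ → Polynomial ℂ := fun t => Polynomial.map (MvPolynomial.eval ![t]) g with hA
  have hAco : ∀ (t : ℂ) (i : ℕ), (A t).coeff i = MvPolynomial.eval ![t] (g.coeff i) :=
    fun t i => Polynomial.coeff_map _ _
  have hAdeg : ∀ t : ℂ, (A t).natDegree ≤ n := fun t => le_trans Polynomial.natDegree_map_le (le_of_eq hgd)
  set E : ℂ → ℂ := fun t => MvPolynomial.eval ![t] (g.coeff n) with hE
  have star : ∀ l m' : ℂ, (((β : ℂ) + b) * l - b * m' - φ β) * E (l + m')
      = b * E m' * (((n : ℂ) + Q - q γ) * l + M - m' - m γ) := by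
    intro l m'
    have hpoly : Polynomial.C (((β : ℂ) + b) * l - b * m' - φ β) * A (l + m')
        = Polynomial.C b * (Polynomial.taylor l (A m') * Polynomial.X)
          + Polynomial.C (b * (Q * l + M)) * Polynomial.taylor l (A m')
          - (Polynomial.C b * (A m' * Polynomial.X)
            + Polynomial.C (b * (m' + q γ * l + m γ)) * A m') := by
      apply Polynomial.funext
      intro d
      have ht : Polynomial.eval d (Polynomial.taylor l (A m')) = ev2 (f β γ) m' (l + d) := by
        rw [Polynomial.taylor_eval, add_comm d l, hEv]
      simp only [Polynomial.eval_mul, Polynomial.eval_add, Polynomial.eval_sub,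
        Polynomial.eval_C, Polynomial.eval_X, ht]
      rw [hA]
      simp only [← hEv]
      linear_combination key l m' d
    cases n with
    | zero =>
        have h1 := congrArg (fun P => Polynomial.coeff P 0) hpoly
        simp only [Polynomial.coeff_sub, Polynomial.coeff_add, Polynomial.coeff_C_mul,
          Polynomial.coeff_mul_X_zero, mul_zero] at h1
        rw [aux_taylor_top (hAdeg m') l] at h1
        simp only [hAco] at h1
        simp only [hE]
        push_cast
        linear_combination h1
    | succ N =>
        have h1 := congrArg (fun P => Polynomial.coeff P (N + 1)) hpoly
        simp only [Polynomial.coeff_sub, Polynomial.coeff_add, Polynomial.coeff_C_mul,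
          Polynomial.coeff_mul_X] at h1
        rw [aux_taylor_top (hAdeg m') l, aux_taylor_pred (hAdeg m') l] at h1
        simp only [hAco] at h1
        simp only [hE]
        push_cast
        linear_combination h1
  have hgne : g ≠ 0 := by
    intro h
    apply hnz β γ
    have hF0 : F = 0 := by
      have h2 := congrArg (MvPolynomial.finSuccEquiv ℂ 1).symm h
      rw [hg] at h2
      simpa using h2
    exact MvPolynomial.rename_injective _ (Equiv.injective _) (by rw [map_zero]; exact hF0)
  have han : g.coeff n ≠ 0 := by
    have h := Polynomial.leadingCoeff_ne_zero.mpr hgne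
    rwa [Polynomial.leadingCoeff, hgd] at h
  obtain ⟨v, hv⟩ : ∃ v : Fin 1 → ℂ, MvPolynomial.eval v (g.coeff n) ≠ 0 := by
    by_contra hc
    push_neg at hc
    exact han (MvPolynomial.funext fun x => by simp [hc x])
  set m₀ := v 0 with hm₀
  have hvm : v = ![m₀] := by funext i; fin_cases i; rfl
  have hEm₀ : E m₀ ≠ 0 := by simp only [hE]; rw [← hvm]; exact hv
  set p : Polynomial ℂ :=
    Polynomial.map (MvPolynomial.eval (![] : Fin 0 → ℂ))
      (MvPolynomial.finSuccEquiv ℂ 0 (g.coeff n)) with hp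
  have hpe : ∀ t : ℂ, Polynomial.eval t p = E t := by
    intro t
    rw [hp, ← MvPolynomial.eval_eq_eval_mv_eval']
    simp only [hE]
    rfl
  set u := (β : ℂ) + b with hu
  set K := b * E m₀ * ((n : ℂ) + Q - q γ) with hK
  set c₃ := u * m₀ + b * m₀ + φ β with hc₃
  set c₆ := b * E m₀ * (M - m₀ - m γ) - K * m₀ with hc₆
  have hpoly2 : (Polynomial.C u * Polynomial.X - Polynomial.C c₃) * p
      = Polynomial.C K * Polynomial.X + Polynomial.C c₆ := by
    apply Polynomial.funext
    intro s
    have h := star (s - m₀) m₀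
    rw [sub_add_cancel] at h
    simp only [Polynomial.eval_mul, Polynomial.eval_add, Polynomial.eval_sub,
      Polynomial.eval_C, Polynomial.eval_X, hpe]
    linear_combination h
  have hpne : p ≠ 0 := fun h => hEm₀ (by rw [← hpe m₀, h, Polynomial.eval_zero])
  have hlin : (Polynomial.C u * Polynomial.X - Polynomial.C c₃).natDegree = 1 := by
    rw [sub_eq_add_neg, ← Polynomial.C_neg]
    exact Polynomial.natDegree_linear hβb
  have hlinne : (Polynomial.C u * Polynomial.X - Polynomial.C c₃) ≠ 0 := by
    intro h; rw [h] at hlin; simp at hlin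
  have hdp : p.natDegree = 0 := by
    have h1 : ((Polynomial.C u * Polynomial.X - Polynomial.C c₃) * p).natDegree
        = 1 + p.natDegree := by
      rw [Polynomial.natDegree_mul hlinne hpne, hlin]
    rw [hpoly2] at h1
    have h2 := Polynomial.natDegree_linear_le (a := K) (b := c₆)
    omega
  have hc₀ : p = Polynomial.C (p.coeff 0) := Polynomial.eq_C_of_natDegree_le_zero (le_of_eq hdp)
  have hc0ne : p.coeff 0 ≠ 0 := fun h => hpne (by rw [hc₀, h, Polynomial.C_0])
  have hEc : E m₀ = p.coeff 0 := by
    rw [← hpe m₀, hc₀]; simp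
  have h1 := congrArg (fun P => Polynomial.coeff P 1) hpoly2
  rw [hc₀] at h1
  simp only [Polynomial.coeff_add, Polynomial.coeff_sub, Polynomial.coeff_C_mul,
    Polynomial.coeff_X_one, Polynomial.coeff_C, mul_one] at h1
  norm_num at h1
  -- h1 : u * p.coeff 0 = K  (hopefully, modulo C-mul arrangement)
  have hu2 : u = b * ((n : ℂ) + Q - q γ) := by
    apply mul_right_cancel₀ hc0ne
    rw [hK, hEc] at h1
    linear_combination h1
  rw [hu] at hu2
  field_simp
  linear_combination -hu2
end

section
/- Suppose f_{α,γ}(λ,∂) ∈ ℂ[λ,∂] (α, γ ∈ Δ) satisfies the intermediate-series equation, every f_{α,γ} is nonzero, and q_γ, m_γ ∈ ℂ are the constants with f_{0,γ}(λ,∂) = b(∂ + q_γλ + m_γ). If there exist β₀ ≠ 0 and γ₀ ∈ Δ such that f_{β₀,γ₀} is of Form (III), i.e. f_{β₀,γ₀}(λ,∂) = c(∂ + m_{β₀+γ₀})(∂ + (b/(β₀+b))λ + m_{β₀+γ₀} + φ(β₀)/(β₀+b)) with c ≠ 0, q_{β₀+γ₀} = 0, q_{γ₀} = 1 − β₀/b,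 then for every α ∈ Δ with α ≠ 0, f_{α,β₀+γ₀} is a nonzero constant polynomial and q_{α+β₀+γ₀} − q_{β₀+γ₀} = α/b + 1. -/
section Forms

variable {Δ : AddSubgroup ℂ}

/-- Form (I): `f_{β,γ} = c` a nonzero constant, with `β ≠ 0` and
`q_{β+γ} − q_γ = β/b + 1`. -/
def FormI (b : ℂ) (q : Δ → ℂ) (β γ : Δ) (P : MvPolynomial (Fin 2) ℂ) : Prop :=
  ∃ c : ℂ, c ≠ 0 ∧ (∀ l d : ℂ, ev2 P l d = c) ∧ β ≠ 0 ∧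
    q (β + γ) - q γ = (β : ℂ) / b + 1

/-- Form (II): `f_{β,γ}(λ,∂) = c(∂ + (b q_{β+γ}/(β+b))λ + m_{β+γ} + (φ(β)/(β+b))q_{β+γ})`
with `c ≠ 0` and `q_{β+γ} − q_γ = β/b`. -/
def FormII (b : ℂ) (φ : Δ →+ ℂ) (q m : Δ → ℂ) (β γ : Δ)
    (P : MvPolynomial (Fin 2) ℂ) : Prop :=
  ∃ c : ℂ, c ≠ 0 ∧
    (∀ l d : ℂ, ev2 P l d
      = c * (d + (b * q (β + γ) / ((β : ℂ) + b)) * l + m (β + γ)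
          + (φ β / ((β : ℂ) + b)) * q (β + γ))) ∧
    q (β + γ) - q γ = (β : ℂ) / b

/-- Form (III): `f_{β,γ}(λ,∂) = c(∂ + m_{β+γ})(∂ + (b/(β+b))λ + m_{β+γ} + φ(β)/(β+b))`
with `c ≠ 0`, `β ≠ 0`, `q_{β+γ} = 0` and `q_γ = 1 − β/b`. -/
def FormIII (b : ℂ) (φ : Δ →+ ℂ) (q m : Δ → ℂ) (β γ : Δ)
    (P : MvPolynomial (Fin 2) ℂ) : Prop :=
  ∃ c : ℂ, c ≠ 0 ∧
    (∀ l d : ℂ, ev2 P l d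
      = c * (d + m (β + γ))
          * (d + (b / ((β : ℂ) + b)) * l + m (β + γ) + φ β / ((β : ℂ) + b))) ∧
    β ≠ 0 ∧ q (β + γ) = 0 ∧ q γ = 1 - (β : ℂ) / b

/-- Form (IV): `f_{β,γ}(λ,∂) = c((∂ + m_{β+γ})(∂ + ((2β+b)/(β+b))λ + m_{β+γ}
+ ((2β+b)/(2(β+b)))φ(β)) + (β/(β+b))(λ + φ(β)/b)²)` with `c ≠ 0`, `β ≠ 0`,
`q_{β+γ} = β/b` and `q_γ = 1`. -/
def FormIV (b : ℂ) (φ : Δ →+ ℂ) (q m : Δ → ℂ) (β γ : Δ)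
    (P : MvPolynomial (Fin 2) ℂ) : Prop :=
  ∃ c : ℂ, c ≠ 0 ∧
    (∀ l d : ℂ, ev2 P l d
      = c * ((d + m (β + γ))
            * (d + ((2 * (β : ℂ) + b) / ((β : ℂ) + b)) * l + m (β + γ)
                + ((2 * (β : ℂ) + b) / (2 * ((β : ℂ) + b))) * φ β)
          + ((β : ℂ) / ((β : ℂ) + b)) * (l + φ β / b) ^ 2)) ∧
    β ≠ 0 ∧ q (β + γ) = (β : ℂ) / b ∧ q γ = 1

end Forms

/-!
Putting `α = 0` in the intermediate-series equation gives a functional equation for each single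
`f_{δ,γ}`. Where its factor `(δ + b)λ - bμ - φ(δ)` vanishes, it says that `u = f_{δ,γ}(μ, ·)`
satisfies a difference equation `u(∂ + λ)(∂ + a) = (∂ + t) u(∂)`; comparing `∂ⁿ`-coefficients
gives `t = a + nλ` with `n = deg_∂ f_{δ,γ}`, i.e. `q_{δ+γ} - q_γ = δ/b + 1 - n`, and the same
comparison for general `λ, μ` shows that the leading `∂`-coefficient is a constant. So `n = 0`
means `f_{δ,γ}` is constant, while for `n = 2` the difference equation factors `f_{δ,γ}`, and one
more specialisation yields `(q_γ - 1)(δ/b + q_γ - 1) = 0`.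

For `α ≠ 0` the degrees of `f_{α,β₀+γ₀}` and `f_{-α,α+β₀+γ₀}` add up to `2`. Degree `2` would
force `α = b` (as `q_{β₀+γ₀} = 0`), contradicting `2b ∉ Δ`; degree `1` would force
`f_{α+β₀,γ₀}` to have degree `2`, and then `q_{γ₀} = 1 - β₀/b` gives `β₀ α = 0`.
-/

open Polynomial

namespace Polynomial

variable {R : Type*}

theorem coeff_comp_X_add_C_of_natDegree_le [CommSemiring R] {u : R[X]} {n : ℕ}
    (hu : u.natDegree ≤ n + 1) (c : R) :
    (u.comp (X + C c)).coeff n = u.coeff n + (n + 1) * c * u.coeff (n + 1) := by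
  rw [← taylor_apply, taylor_coeff]
  have hdeg : (hasseDeriv n u).natDegree ≤ 1 :=
    (natDegree_hasseDeriv_le u n).trans (by omega)
  rw [eq_X_add_C_of_natDegree_le_one hdeg]
  simp only [hasseDeriv_coeff, add_comm 1 n, Nat.choose_succ_self_right, Nat.cast_add,
    Nat.cast_one, map_mul, map_add, map_natCast, map_one, zero_add, Nat.choose_self, one_mul,
    eval_add, eval_mul, eval_natCast, eval_one, eval_C, eval_X]
  ring

theorem coeff_comp_X_add_C_mul_sub [CommRing R] {u : R[X]} {n : ℕ} (hu : u.natDegree ≤ n)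
    (c a t : R) :
    (u.comp (X + C c) * (X + C a) - (X + C t) * u).coeff n = (n * c + a - t) * u.coeff n := by
  cases n with
  | zero =>
    rw [eq_C_of_natDegree_le_zero hu]
    simp only [C_comp, coeff_sub, coeff_mul_C, mul_add, coeff_add, coeff_mul_X_zero,
      coeff_X_zero, coeff_C_zero]
    ring
  | succ k =>
    have htop : (u.comp (X + C c)).coeff (k + 1) = u.coeff (k + 1) := by
      rw [coeff_comp_X_add_C_of_natDegree_le (u := u) (n := k + 1) (by omega),
        coeff_eq_zero_of_natDegree_lt (p := u) (n := k + 1 + 1) (by omega), mul_zero, add_zero]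
    simp only [mul_add, add_mul, coeff_sub, coeff_add, coeff_mul_X, coeff_X_mul, coeff_mul_C,
      coeff_C_mul, htop, coeff_comp_X_add_C_of_natDegree_le hu]
    push_cast
    ring

theorem eq_add_natDegree_mul_of_comp_X_add_C_mul_eq [CommRing R] [IsDomain R] {u : R[X]}
    (hu : u ≠ 0) {σ a t : R} (h : u.comp (X + C σ) * (X + C a) = (X + C t) * u) :
    t = a + u.natDegree * σ := by
  have hcoeff := coeff_comp_X_add_C_mul_sub le_rfl σ a t (u := u)
  rw [h, sub_self, coeff_zero, eq_comm, mul_eq_zero] at hcoeff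
  rcases hcoeff with h | h
  · linear_combination -h
  · exact absurd (leadingCoeff_eq_zero.mp h) hu

theorem eval_eq_coeff_two_mul_of_natDegree_le_two [Field R] {u : R[X]} (hu : u.natDegree ≤ 2)
    {r₁ r₂ : R} (hr : r₁ ≠ r₂) (h₁ : u.eval r₁ = 0) (h₂ : u.eval r₂ = 0) (x : R) :
    u.eval x = u.coeff 2 * (x - r₁) * (x - r₂) := by
  have hsum : ∀ y, u.eval y = u.coeff 0 + u.coeff 1 * y + u.coeff 2 * y ^ 2 := fun y => by
    simp [eval_eq_sum_range' (Nat.lt_succ_of_le hu), Finset.sum_range_succ]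
  rw [hsum] at h₁ h₂ ⊢
  apply mul_left_cancel₀ (sub_ne_zero.mpr hr.symm)
  linear_combination (x - r₁) * h₂ - (x - r₂) * h₁

end Polynomial

/-- `p(λ, ∂)` as a polynomial in `∂` over `ℂ[λ]`. -/
noncomputable def toPolyPoly (p : MvPolynomial (Fin 2) ℂ) : ℂ[X][X] :=
  MvPolynomial.aeval ![C X, X] p

noncomputable def slice (p : MvPolynomial (Fin 2) ℂ) (l : ℂ) : ℂ[X] :=
  (toPolyPoly p).map (evalRingHom l)

theorem eval_slice (p : MvPolynomial (Fin 2) ℂ) (l d : ℂ) : (slice p l).eval d = ev2 p l d := by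
  induction p using MvPolynomial.induction_on with
  | C a => simp [slice, toPolyPoly, ev2]
  | add p p' hp hp' => simp_all [slice, toPolyPoly, ev2]
  | mul_X p i hp =>
    simp only [slice, toPolyPoly, ev2, map_mul, Polynomial.map_mul, eval_mul] at hp ⊢
    rw [hp]
    fin_cases i <;> simp

theorem coeff_slice (p : MvPolynomial (Fin 2) ℂ) (l : ℂ) (j : ℕ) :
    (slice p l).coeff j = ((toPolyPoly p).coeff j).eval l :=
  coeff_map _ _

theorem natDegree_slice_le (p : MvPolynomial (Fin 2) ℂ) (l : ℂ) :
    (slice p l).natDegree ≤ (toPolyPoly p).natDegree :=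
  natDegree_map_le

theorem toPolyPoly_ne_zero {p : MvPolynomial (Fin 2) ℂ} (hp : p ≠ 0) : toPolyPoly p ≠ 0 := by
  refine fun h => hp (MvPolynomial.funext fun x => ?_)
  have hx : x = ![x 0, x 1] := by ext i; fin_cases i <;> rfl
  rw [hx, map_zero, ← ev2, ← eval_slice, slice, h, Polynomial.map_zero, eval_zero]

theorem continuous_ev2_left (p : MvPolynomial (Fin 2) ℂ) (d : ℂ) :
    Continuous fun w => ev2 p w d :=
  (MvPolynomial.continuous_eval p).comp (by fun_prop)

/-- The intermediate-series equation at `α = 0`, divided by `b`, for `p = f_{δ,γ}`: here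
`s = (δ+b)/b`, `e = φ(δ)/b`, `(q, m) = (q_γ, m_γ)` and `(Q, M) = (q_{δ+γ}, m_{δ+γ})`. -/
def ZeroModeEq (p : MvPolynomial (Fin 2) ℂ) (s e q m Q M : ℂ) : Prop :=
  ∀ l w d : ℂ, (s * l - (w + e)) * ev2 p (l + w) d
    = ev2 p w (l + d) * (d + Q * l + M) - (w + d + q * l + m) * ev2 p w d

theorem ISE.zeroModeEq {Δ : AddSubgroup ℂ} {b : ℂ} {φ : Δ →+ ℂ}
    {f : Δ → Δ → MvPolynomial (Fin 2) ℂ} (hf : ISE Δ b φ f) (hb : b ≠ 0) {q m : Δ → ℂ}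
    (h0 : ∀ γ : Δ, ∀ l d : ℂ, ev2 (f 0 γ) l d = b * (d + q γ * l + m γ)) (δ γ : Δ) :
    ZeroModeEq (f δ γ) (((δ : ℂ) + b) / b) (φ δ / b) (q γ) (m γ) (q (δ + γ)) (m (δ + γ)) := by
  intro l w d
  have hB : Bc b φ 0 δ = -φ δ := by
    simp only [Bc, map_zero, ZeroMemClass.coe_zero]
    field_simp
    ring
  have h := hf 0 δ γ l w d
  simp only [zero_add, h0, hB, ZeroMemClass.coe_zero] at h
  apply mul_left_cancel₀ hb
  field_simp
  linear_combination h

namespace ZeroModeEq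

variable {p : MvPolynomial (Fin 2) ℂ} {s e q m Q M : ℂ}

theorem C_mul_slice_add (hp : ZeroModeEq p s e q m Q M) (l w : ℂ) :
    C (s * l - (w + e)) * slice p (l + w)
      = (slice p w).comp (X + C l) * (X + C (Q * l + M)) - (X + C (w + q * l + m)) * slice p w := by
  refine Polynomial.funext fun d => ?_
  simp only [eval_mul, eval_sub, eval_add, eval_comp, eval_C, eval_X, eval_slice]
  rw [add_comm d l]
  linear_combination hp l w d

theorem slice_comp_X_add_C_mul_eq (hp : ZeroModeEq p s e q m Q M) (hs : s ≠ 0) (w : ℂ) :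
    (slice p w).comp (X + C ((w + e) / s)) * (X + C (Q * ((w + e) / s) + M))
      = (X + C (w + q * ((w + e) / s) + m)) * slice p w := by
  have h := hp.C_mul_slice_add ((w + e) / s) w
  rw [mul_div_cancel₀ _ hs, sub_self, map_zero, zero_mul, eq_comm, sub_eq_zero] at h
  exact h

theorem sub_add_natDegree_eq_and_eq_sub (hp : ZeroModeEq p s e q m Q M) (hs : s ≠ 0) (hp0 : p ≠ 0) :
    Q - q + (toPolyPoly p).natDegree = s ∧ M = m - e := by
  set n := (toPolyPoly p).natDegree
  have hA : (toPolyPoly p).leadingCoeff ≠ 0 := leadingCoeff_ne_zero.mpr (toPolyPoly_ne_zero hp0)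
  have hrel : ∀ w, ¬ (toPolyPoly p).leadingCoeff.IsRoot w →
      s * (w + m) = (Q - q + n) * (w + e) + s * M := by
    intro w hw
    have hcoeff : (slice p w).coeff n ≠ 0 := by rwa [coeff_slice]
    have hdeg : (slice p w).natDegree = n :=
      natDegree_eq_of_le_of_coeff_ne_zero (natDegree_slice_le p w) hcoeff
    have h := eq_add_natDegree_mul_of_comp_X_add_C_mul_eq
      (fun h => hcoeff (by rw [h, coeff_zero])) (hp.slice_comp_X_add_C_mul_eq hs w)
    rw [hdeg] at h
    field_simp at h
    linear_combination h
  obtain ⟨x, hx, y, hy, hxy⟩ := (finite_setOfPred_isRoot hA).infinite_compl.nontrivial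
  have hslope : Q - q + n = s := by
    apply mul_right_cancel₀ (sub_ne_zero.mpr hxy)
    linear_combination hrel y hy - hrel x hx
  refine ⟨hslope, mul_left_cancel₀ hs ?_⟩
  linear_combination -(x + e) * hslope - hrel x hx

theorem exists_coeff_slice_eq (hp : ZeroModeEq p s e q m Q M) (hs : s ≠ 0) (hp0 : p ≠ 0) :
    ∃ c ≠ 0, ∀ w, (slice p w).coeff (toPolyPoly p).natDegree = c := by
  set A := (toPolyPoly p).leadingCoeff
  obtain ⟨hslope, hM⟩ := hp.sub_add_natDegree_eq_and_eq_sub hs hp0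
  have hstep : ∀ l w, (s * l - (w + e)) * (A.eval (l + w) - A.eval w) = 0 := by
    intro l w
    have h := congrArg (coeff · (toPolyPoly p).natDegree) (hp.C_mul_slice_add l w)
    rw [coeff_C_mul, coeff_comp_X_add_C_mul_sub (natDegree_slice_le p w), coeff_slice, coeff_slice,
      coeff_natDegree] at h
    linear_combination h + l * A.eval w * hslope + A.eval w * hM
  have hconst : (fun x => A.eval x) = fun _ => A.eval 0 := by
    refine Continuous.ext_on (dense_compl_singleton (e / s)) A.continuous continuous_const
      fun x hx => ?_
    have h := hstep x 0
    rw [add_zero, zero_add, mul_eq_zero, sub_eq_zero, sub_eq_zero] at h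
    exact h.resolve_left fun h' => hx (by rw [Set.mem_singleton_iff, ← h']; field_simp)
  refine ⟨A.eval 0, fun h0 => ?_, fun w => by
    rw [coeff_slice, coeff_natDegree]; exact congrFun hconst w⟩
  refine leadingCoeff_ne_zero.mpr (toPolyPoly_ne_zero hp0) (Polynomial.funext fun x => ?_)
  rw [congrFun hconst x, h0, eval_zero]

theorem exists_const_of_natDegree_eq_zero (hp : ZeroModeEq p s e q m Q M) (hs : s ≠ 0)
    (hp0 : p ≠ 0) (hn : (toPolyPoly p).natDegree = 0) : ∃ c ≠ 0, ∀ l d, ev2 p l d = c := by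
  obtain ⟨c, hc, hcoeff⟩ := hp.exists_coeff_slice_eq hs hp0
  refine ⟨c, hc, fun l d => ?_⟩
  have hdeg : (slice p l).natDegree ≤ 0 := hn ▸ natDegree_slice_le p l
  rw [← eval_slice, eq_C_of_natDegree_le_zero hdeg, eval_C, ← hn, hcoeff]

theorem ev2_eq_of_natDegree_eq_two (hp : ZeroModeEq p s e q m Q M) (hs : s ≠ 0) (hp0 : p ≠ 0)
    (hn : (toPolyPoly p).natDegree = 2) {w : ℂ} (hw : w + e ≠ 0) (d : ℂ) :
    ev2 p w d = (slice p w).coeff 2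
      * (d + w + (q - 1) * ((w + e) / s) + m) * (d + w + (q - 2) * ((w + e) / s) + m) := by
  obtain ⟨hslope, hM⟩ := hp.sub_add_natDegree_eq_and_eq_sub hs hp0
  rw [hn] at hslope
  set σ := (w + e) / s
  have hσ : σ ≠ 0 := div_ne_zero hw hs
  have hσs : σ * s = w + e := div_mul_cancel₀ _ hs
  have hshift : ∀ x, (slice p w).eval (x + σ) * (x + (Q * σ + M))
      = (x + (w + q * σ + m)) * (slice p w).eval x :=
    fun x => by
      simpa only [eval_mul, eval_comp, eval_add, eval_X, eval_C] using
        congrArg (eval x) (hp.slice_comp_X_add_C_mul_eq hs w)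
  clear_value σ
  have h₁ : (slice p w).eval (σ - (w + q * σ + m)) = 0 := by
    have h := hshift (-(w + q * σ + m))
    rw [neg_add_cancel, zero_mul, neg_add_eq_sub,
      show -(w + q * σ + m) + (Q * σ + M) = -2 * σ by linear_combination σ * hslope + hM + hσs] at h
    exact (mul_eq_zero.mp h).resolve_right (mul_ne_zero (by norm_num) hσ)
  have h₂ : (slice p w).eval (2 * σ - (w + q * σ + m)) = 0 := by
    have h := hshift (σ - (w + q * σ + m))
    rw [h₁, mul_zero, show σ - (w + q * σ + m) + σ = 2 * σ - (w + q * σ + m) by ring,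
      show σ - (w + q * σ + m) + (Q * σ + M) = -σ by linear_combination σ * hslope + hM + hσs] at h
    exact (mul_eq_zero.mp h).resolve_right (neg_ne_zero.mpr hσ)
  have hr : σ - (w + q * σ + m) ≠ 2 * σ - (w + q * σ + m) := fun h => hσ (by linear_combination -h)
  rw [← eval_slice,
    eval_eq_coeff_two_mul_of_natDegree_le_two (hn ▸ natDegree_slice_le p w) hr h₁ h₂]
  ring

theorem mul_eq_zero_of_natDegree_eq_two (hp : ZeroModeEq p s e q m Q M) (hs : s ≠ 0)
    (hp0 : p ≠ 0) (hn : (toPolyPoly p).natDegree = 2) : (q - 1) * (s + q - 2) = 0 := by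
  obtain ⟨c, hc, hcoeff⟩ := hp.exists_coeff_slice_eq hs hp0
  obtain ⟨hslope, hM⟩ := hp.sub_add_natDegree_eq_and_eq_sub hs hp0
  rw [hn] at hslope hcoeff
  have hshape : ∀ d w, ev2 p w d
      = c * (d + w + (q - 1) * ((w + e) / s) + m) * (d + w + (q - 2) * ((w + e) / s) + m) := by
    refine fun d => funext_iff.mp (Continuous.ext_on (dense_compl_singleton (-e))
      (continuous_ev2_left p d) ?_ fun w hw => ?_)
    · fun_prop
    · rw [hp.ev2_eq_of_natDegree_eq_two hs hp0 hn (fun h => hw (eq_neg_of_add_eq_zero_left h)),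
        hcoeff]
  -- `f(-e, ∂) = c (∂ + M)²`, so this specialisation reads `s f(1 - e, -M) = c Q`.
  have h := hp 1 (-e) (-M)
  rw [hshape, hshape, hshape, hM] at h
  field_simp at h
  apply mul_left_cancel₀ hs
  linear_combination h + s ^ 2 * hslope

end ZeroModeEq

theorem coe_add_ne_zero_of_two_mul_notMem {Δ : AddSubgroup ℂ} {b : ℂ} (hb : 2 * b ∉ Δ) (δ : Δ) :
    (δ : ℂ) + b ≠ 0 := fun h =>
  hb (by simpa [two_mul, eq_neg_of_add_eq_zero_right h] using (-δ + -δ).2)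

theorem ISE.exists_natDegree {Δ : AddSubgroup ℂ} {b : ℂ} {φ : Δ →+ ℂ}
    {f : Δ → Δ → MvPolynomial (Fin 2) ℂ} (hf : ISE Δ b φ f) (hb : 2 * b ∉ Δ)
    (hnz : ∀ α γ : Δ, f α γ ≠ 0) {q m : Δ → ℂ}
    (h0 : ∀ γ : Δ, ∀ l d : ℂ, ev2 (f 0 γ) l d = b * (d + q γ * l + m γ)) (δ γ : Δ) :
    ∃ n : ℕ, q (δ + γ) - q γ = (δ : ℂ) / b + 1 - n ∧
      (n = 0 → ∃ c ≠ 0, ∀ l d, ev2 (f δ γ) l d = c) ∧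
      (n = 2 → (q γ - 1) * ((δ : ℂ) / b + q γ - 1) = 0) := by
  have hb0 : b ≠ 0 := by simpa using coe_add_ne_zero_of_two_mul_notMem hb 0
  have hs : ((δ : ℂ) + b) / b ≠ 0 := div_ne_zero (coe_add_ne_zero_of_two_mul_notMem hb δ) hb0
  have hp := hf.zeroModeEq hb0 h0 δ γ
  have hδ : ((δ : ℂ) + b) / b = δ / b + 1 := by field_simp
  refine ⟨_, ?_, hp.exists_const_of_natDegree_eq_zero hs (hnz δ γ), fun hn => ?_⟩
  · linear_combination (hp.sub_add_natDegree_eq_and_eq_sub hs (hnz δ γ)).1 + hδ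
  · linear_combination hp.mul_eq_zero_of_natDegree_eq_two hs (hnz δ γ) hn - (q γ - 1) * hδ

theorem stmt17_general (Δ : AddSubgroup ℂ)
    (b : ℂ) (hb : 2 * b ∉ Δ) (φ : Δ →+ ℂ)
    (f : Δ → Δ → MvPolynomial (Fin 2) ℂ) (hf : ISE Δ b φ f)
    (hnz : ∀ α γ : Δ, f α γ ≠ 0)
    (q m : Δ → ℂ)
    (h0 : ∀ γ : Δ, ∀ l d : ℂ, ev2 (f 0 γ) l d = b * (d + q γ * l + m γ))
    (β₀ γ₀ : Δ) (hβ₀ : β₀ ≠ 0) (hIII : FormIII b φ q m β₀ γ₀ (f β₀ γ₀)) :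
    ∀ α : Δ, α ≠ 0 →
      (∃ c : ℂ, c ≠ 0 ∧ ∀ l d : ℂ, ev2 (f α (β₀ + γ₀)) l d = c) ∧
      q (α + β₀ + γ₀) - q (β₀ + γ₀) = (α : ℂ) / b + 1 := by
  intro α hα
  obtain ⟨-, -, -, -, hq, hqγ₀⟩ := hIII
  have hb0 : b ≠ 0 := by simpa using coe_add_ne_zero_of_two_mul_notMem hb 0
  obtain ⟨n₁, h₁, hconst₁, hquad₁⟩ := hf.exists_natDegree hb hnz h0 α (β₀ + γ₀)
  obtain ⟨n₂, h₂, -, -⟩ := hf.exists_natDegree hb hnz h0 (-α) (α + (β₀ + γ₀))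
  rw [neg_add_cancel_left, ← add_assoc] at h₂
  rw [← add_assoc] at h₁
  have hsum : n₁ + n₂ = 2 := by
    exact_mod_cast (by push_cast at h₂ ⊢; linear_combination h₁ + h₂ : ((n₁ + n₂ : ℕ) : ℂ) = 2)
  obtain rfl | rfl | rfl : n₁ = 0 ∨ n₁ = 1 ∨ n₁ = 2 := by omega
  · exact ⟨hconst₁ rfl, by linear_combination h₁⟩
  · obtain ⟨n₃, h₃, -, hquad₃⟩ := hf.exists_natDegree hb hnz h0 (α + β₀) γ₀
    have hn₃ : n₃ = 2 := by
      exact_mod_cast (by push_cast at h₁ h₃; linear_combination h₃ - h₁ + hqγ₀ - hq : (n₃ : ℂ) = 2)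
    have h := hquad₃ hn₃
    rw [hqγ₀] at h
    push_cast at h
    field_simp at h
    exact absurd (by linear_combination -h : (β₀ : ℂ) * α = 0)
      (mul_ne_zero (by simpa using hβ₀) (by simpa using hα))
  · have h := hquad₁ rfl
    rw [hq] at h
    field_simp at h
    have hαb : (α : ℂ) = b := by linear_combination -h
    exact absurd (by simpa [two_mul, hαb] using (α + α).2) hb

/-- With all members nonzero and `f_{0,γ}(λ,∂) = b(∂ + q_γλ + m_γ)`,
if some `f_{β₀,γ₀}` with `β₀ ≠ 0` is of Form (III), then for every `α ≠ 0` the member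
`f_{α,β₀+γ₀}` is a nonzero constant polynomial and
`q_{α+β₀+γ₀} − q_{β₀+γ₀} = α/b + 1`. -/
theorem stmt17 (Δ : AddSubgroup ℂ) (hΔinf : (Δ : Set ℂ).Infinite)
    (b : ℂ) (hb : 2 * b ∉ Δ) (φ : Δ →+ ℂ)
    (f : Δ → Δ → MvPolynomial (Fin 2) ℂ) (hf : ISE Δ b φ f)
    (hnz : ∀ α γ : Δ, f α γ ≠ 0)
    (q m : Δ → ℂ)
    (h0 : ∀ γ : Δ, ∀ l d : ℂ, ev2 (f 0 γ) l d = b * (d + q γ * l + m γ))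
    (β₀ γ₀ : Δ) (hβ₀ : β₀ ≠ 0) (hIII : FormIII b φ q m β₀ γ₀ (f β₀ γ₀)) :
    ∀ α : Δ, α ≠ 0 →
      (∃ c : ℂ, c ≠ 0 ∧ ∀ l d : ℂ, ev2 (f α (β₀ + γ₀)) l d = c) ∧
      q (α + β₀ + γ₀) - q (β₀ + γ₀) = (α : ℂ) / b + 1 :=
  stmt17_general Δ b hb φ f hf hnz q m h0 β₀ γ₀ hβ₀ hIII
end
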